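/- arXiv:1005.3470 — 7 statements merged into one kernel-verified Lean document; each statement's English description precedes it below -/
import Mathlib

section
/- Let G(V,A) be a finite directed graph with a fixed source s and target u, where removal of each node v is an independent Bernoulli event with probability γ(v) and τ ≡ 1. Suppose γ₋ and γ agree on all nodes except a single node z, where γ₋(z) ≤ γ(z). Then the probability that u is ultimately infected satisfies P_{γ₋}(u infected) ≥ P_γ(u infected). Moreover, writing F_z for the event that the set of removed nodes contains a z-vital s–u cut and F_{z̄} for the event that it contains an s–u cut not requiring z, the probability of non-infection decomposes as P(F_z) + P(F_{z̄}) with P(F_z) = c₁·γ(z) for a constant c₁ independent of γ(z) and P(F_{z̄}) independent of γ(z). -/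
open Finset

/-- A full assignment of random coins for the epidemic: initial-infection coins,
removal coins, and per-(ordered-)edge transmission coins. -/
abbrev Coins (V : Type*) := (V → Bool) × (V → Bool) × (V → V → Bool)

variable {V : Type*} [Fintype V] [DecidableEq V]

/-- Probability weight of a coin outcome `ω` under induction probabilities `σ`,
removal probabilities `γ` and transmission probabilities `τ`. -/
def coinWeight (σ γ : V → ℝ) (τ : V → V → ℝ) (ω : Coins V) : ℝ :=
  (∏ v, if ω.1 v then σ v else 1 - σ v) *
  (∏ v, if ω.2.1 v then γ v else 1 - γ v) *
  ∏ u, ∏ v, if ω.2.2 u v then τ u v else 1 - τ u v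

/-- One step of the discrete-time SIR process: state is `(I, R)`.
An infected node, unless removed (removal coin `true`), transmits to each
susceptible out-neighbour whose transmission coin is `true`; then it recovers. -/
def sirStep (A : V → V → Bool) (ω : Coins V) (p : Finset V × Finset V) :
    Finset V × Finset V :=
  (univ.filter (fun v => v ∉ p.1 ∧ v ∉ p.2 ∧
      ∃ u ∈ p.1, ω.2.1 u = false ∧ A u v = true ∧ ω.2.2 u v = true),
   p.2 ∪ p.1)

/-- The discrete-time SIR process `(I_t, R_t)`; susceptibles are the complement. -/
def sirProc (A : V → V → Bool) (ω : Coins V) : ℕ → Finset V × Finset V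
  | 0 => (univ.filter (fun v => ω.1 v = true), ∅)
  | t + 1 => sirStep A ω (sirProc A ω t)

/-- The set of ever-infected nodes (the epidemic is stationary by time `n = |V|`). -/
def everInf (A : V → V → Bool) (ω : Coins V) : Finset V :=
  (sirProc A ω (Fintype.card V)).1 ∪ (sirProc A ω (Fintype.card V)).2

/-- The mean final extent `E(|R_n|)` of the SIR epidemic. -/
def meanExtent (A : V → V → Bool) (σ γ : V → ℝ) (τ : V → V → ℝ) : ℝ :=
  ∑ ω : Coins V, coinWeight σ γ τ ω * ((everInf A ω).card : ℝ)

/-- The probability that node `u` is ultimately infected. -/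
def probInf (A : V → V → Bool) (σ γ : V → ℝ) (τ : V → V → ℝ) (u : V) : ℝ :=
  ∑ ω : Coins V, coinWeight σ γ τ ω * (if u ∈ everInf A ω then 1 else 0)

/-- A directed path (walk) from `s` to `u` in the graph given by `A`, as a list of
visited nodes. -/
def isPath {V : Type*} (A : V → V → Bool) (s u : V) (l : List V) : Prop :=
  l.Chain' (fun x y => A x y = true) ∧ l.head? = some s ∧ l.getLast? = some u

/-- `C` is an `s`–`u` cut: every directed path from `s` to `u` meets `C` among its
transmitting nodes (all nodes of the path except the final node `u`). -/
def isCut {V : Type*} [DecidableEq V] (A : V → V → Bool) (s u : V) (C : Finset V) : Prop :=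
  ∀ l : List V, isPath A s u l → ∃ v ∈ l.dropLast, v ∈ C

/-- A cut `C` is `z`-vital if `z ∈ C` and excising `z` destroys the cut. -/
def zVital {V : Type*} [DecidableEq V] (A : V → V → Bool) (s u z : V) (C : Finset V) : Prop :=
  isCut A s u C ∧ z ∈ C ∧ ¬ isCut A s u (C.erase z)

variable {V : Type*} [Fintype V] [DecidableEq V]

/-- The set of nodes marked removed by the coins `ω`. -/
def removedSet (ω : Coins V) : Finset V := Finset.univ.filter (fun v => ω.2.1 v = true)

attribute [local instance] Classical.propDecidable

/-- Probability of an event `E` (a predicate on coins) when the epidemic starts at the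
single source `s`, all transmissions have probability `1`, and removals have
probabilities `g`. -/
noncomputable def prEvent (s : V) (g : V → ℝ) (E : Coins V → Prop) : ℝ :=
  ∑ ω : Coins V, coinWeight (fun v => if v = s then 1 else 0) g (fun _ _ => 1) ω *
    (if E ω then 1 else 0)

/-- Event `F_z`: the removed nodes form a `z`-vital `s`–`u` cut (they cut, but no
longer cut once `z` is excised). -/
def Fz (A : V → V → Bool) (s u z : V) (ω : Coins V) : Prop :=
  isCut A s u (removedSet ω) ∧ ¬ isCut A s u ((removedSet ω).erase z)

/-- Event `F_z̄`: the removed nodes contain an `s`–`u` cut not requiring `z`. -/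
def Fzbar (A : V → V → Bool) (s u z : V) (ω : Coins V) : Prop :=
  isCut A s u ((removedSet ω).erase z)

namespace SirAux

variable {V : Type*} [Fintype V] [DecidableEq V]

/-- The canonical coins with source `s`, removal coins `r`, all transmissions on. -/
def iota (s : V) (r : V → Bool) : Coins V := (fun v => decide (v = s), r, fun _ _ => true)

/-- The set of ever-touched nodes at time `t`. -/
def uproc (A : V → V → Bool) (ω : Coins V) (t : ℕ) : Finset V :=
  (sirProc A ω t).1 ∪ (sirProc A ω t).2

lemma mem_I_succ {A : V → V → Bool} {ω : Coins V} {t : ℕ} {v : V} :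
    v ∈ (sirProc A ω (t+1)).1 ↔
      v ∉ (sirProc A ω t).1 ∧ v ∉ (sirProc A ω t).2 ∧
      ∃ w ∈ (sirProc A ω t).1, ω.2.1 w = false ∧ A w v = true ∧ ω.2.2 w v = true := by
  show v ∈ (sirStep A ω (sirProc A ω t)).1 ↔ _
  simp [sirStep]

lemma R_succ (A : V → V → Bool) (ω : Coins V) (t : ℕ) :
    (sirProc A ω (t+1)).2 = (sirProc A ω t).2 ∪ (sirProc A ω t).1 := rfl

lemma uproc_subset_succ (A : V → V → Bool) (ω : Coins V) (t : ℕ) :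
    uproc A ω t ⊆ uproc A ω (t+1) := by
  intro v hv
  rcases Finset.mem_union.1 hv with h | h
  · exact Finset.mem_union.2 (Or.inr (by rw [R_succ]; exact Finset.mem_union.2 (Or.inr h)))
  · exact Finset.mem_union.2 (Or.inr (by rw [R_succ]; exact Finset.mem_union.2 (Or.inl h)))

lemma uproc_mono (A : V → V → Bool) (ω : Coins V) {t₁ t₂ : ℕ} (h : t₁ ≤ t₂) :
    uproc A ω t₁ ⊆ uproc A ω t₂ := by
  induction t₂ with
  | zero => simp_all
  | succ t ih =>
    rcases Nat.lt_or_ge t₁ (t+1) with h' | h'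
    · exact (ih (Nat.lt_succ_iff.1 h')).trans (uproc_subset_succ A ω t)
    · have : t₁ = t + 1 := le_antisymm h h'
      subst this; exact subset_rfl

lemma step_of_I_empty (A : V → V → Bool) (ω : Coins V) (t : ℕ)
    (h : (sirProc A ω t).1 = ∅) : sirProc A ω (t+1) = sirProc A ω t := by
  show sirStep A ω (sirProc A ω t) = sirProc A ω t
  have h2 : (sirStep A ω (sirProc A ω t)).2 = (sirProc A ω t).2 := by
    show (sirProc A ω t).2 ∪ (sirProc A ω t).1 = _
    rw [h, Finset.union_empty]
  have h1 : (sirStep A ω (sirProc A ω t)).1 = (sirProc A ω t).1 := by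
    rw [h]
    show Finset.filter _ _ = ∅
    rw [Finset.filter_eq_empty_iff]
    intro v _ hv
    rcases hv with ⟨_, _, w, hw, _⟩
    rw [h] at hw
    exact absurd hw (Finset.notMem_empty w)
  exact Prod.ext h1 h2

lemma const_of_I_empty (A : V → V → Bool) (ω : Coins V) (t : ℕ)
    (h : (sirProc A ω t).1 = ∅) : ∀ k, sirProc A ω (t + k) = sirProc A ω t := by
  intro k
  induction k with
  | zero => rfl
  | succ k ih =>
    have : (sirProc A ω (t + k)).1 = ∅ := by rw [ih]; exact h
    calc sirProc A ω (t + (k+1)) = sirProc A ω ((t + k) + 1) := rfl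
      _ = sirProc A ω (t + k) := step_of_I_empty A ω _ this
      _ = sirProc A ω t := ih

section Source

variable (A : V → V → Bool) (s : V) (r : V → Bool)

lemma mem_I0 {v : V} : v ∈ (sirProc A (iota s r) 0).1 ↔ v = s := by
  simp [sirProc, iota]

lemma exists_stall : ∃ t < Fintype.card V,
    uproc A (iota s r) (t+1) = uproc A (iota s r) t := by
  by_contra hc
  push_neg at hc
  have hcard : ∀ t, t ≤ Fintype.card V → t + 1 ≤ (uproc A (iota s r) t).card := by
    intro t
    induction t with
    | zero =>
      intro _
      have hs : s ∈ uproc A (iota s r) 0 :=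
        Finset.mem_union.2 (Or.inl ((mem_I0 A s r).2 rfl))
      exact Finset.card_pos.2 ⟨s, hs⟩
    | succ t ih =>
      intro h
      have h1 : t + 1 ≤ (uproc A (iota s r) t).card := ih (by omega)
      have hne := hc t (by omega)
      have hss : uproc A (iota s r) t ⊂ uproc A (iota s r) (t+1) :=
        (Finset.ssubset_iff_of_subset (uproc_subset_succ A (iota s r) t)).2
          (by
            rcases Finset.exists_of_ssubset (lt_of_le_of_ne
              (uproc_subset_succ A (iota s r) t) (fun h => hne h.symm)) with ⟨x, hx1, hx2⟩
            exact ⟨x, hx1, hx2⟩)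
      have := Finset.card_lt_card hss
      omega
  have h1 := hcard (Fintype.card V) le_rfl
  have h2 : (uproc A (iota s r) (Fintype.card V)).card ≤ Fintype.card V :=
    Finset.card_le_univ _
  omega

lemma uproc_subset_everInf (t : ℕ) :
    uproc A (iota s r) t ⊆ everInf A (iota s r) := by
  obtain ⟨t₀, ht₀, hstall⟩ := exists_stall A s r
  have hI : (sirProc A (iota s r) (t₀+1)).1 = ∅ := by
    rw [Finset.eq_empty_iff_forall_notMem]
    intro v hv
    have hv' := mem_I_succ.1 hv
    have hmem : v ∈ uproc A (iota s r) t₀ := by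
      rw [← hstall]
      exact Finset.mem_union.2 (Or.inl hv)
    rcases Finset.mem_union.1 hmem with h | h
    · exact hv'.1 h
    · exact hv'.2.1 h
  have hconst := const_of_I_empty A (iota s r) (t₀+1) hI
  have hev : everInf A (iota s r) = uproc A (iota s r) (Fintype.card V) := rfl
  rcases le_or_gt t (Fintype.card V) with h | h
  · rw [hev]; exact uproc_mono A (iota s r) h
  · have h1 : sirProc A (iota s r) t = sirProc A (iota s r) (t₀+1) := by
      have := hconst (t - (t₀+1)); rwa [Nat.add_sub_cancel' (by omega)] at this
    have h2 : sirProc A (iota s r) (Fintype.card V) = sirProc A (iota s r) (t₀+1) := by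
      have := hconst (Fintype.card V - (t₀+1)); rwa [Nat.add_sub_cancel' (by omega)] at this
    rw [hev]; unfold uproc; rw [h1, h2]

/-- Soundness: every touched node is reachable by an open path. -/
lemma sound : ∀ t v, v ∈ uproc A (iota s r) t →
    ∃ l, isPath A s v l ∧ ∀ x ∈ l.dropLast, r x = false := by
  intro t
  induction t with
  | zero =>
    intro v hv
    rcases Finset.mem_union.1 hv with h | h
    · have hvs : v = s := (mem_I0 A s r).1 h
      refine ⟨[s], ⟨List.isChain_singleton s, rfl, ?_⟩, by simp⟩
      simp [hvs]
    · simp [sirProc] at h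
  | succ t ih =>
    intro v hv
    rcases Finset.mem_union.1 hv with hI | hR
    · obtain ⟨_, _, w, hw, hrw, hA, _⟩ := mem_I_succ.1 hI
      obtain ⟨l, ⟨hch, hh, hl⟩, hop⟩ := ih w (Finset.mem_union.2 (Or.inl hw))
      have hne : l ≠ [] := by intro h; rw [h] at hh; simp at hh
      refine ⟨l ++ [v], ⟨?_, ?_, ?_⟩, ?_⟩
      · simp only [List.Chain', List.isChain_append]
        refine ⟨hch, List.isChain_singleton v, ?_⟩
        intro x hx y hy
        have hx' : w = x := by rw [hl] at hx; simpa using hx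
        have hy' : v = y := by simpa using hy
        rw [← hx', ← hy']; exact hA
      · rw [List.head?_append_of_ne_nil _ hne]; exact hh
      · exact List.getLast?_concat
      · rw [List.dropLast_concat]
        intro x hx
        have hl' := List.dropLast_append_getLast hne
        rw [← hl'] at hx
        rcases List.mem_append.1 hx with h | h
        · exact hop x h
        · have : x = l.getLast hne := by simpa using h
          have hw' : l.getLast hne = w := by
            have := List.getLast?_eq_getLast hne
            rw [hl] at this
            exact Option.some.inj this.symm
          rw [this, hw']
          exact hrw
    · rw [R_succ] at hR
      rcases Finset.mem_union.1 hR with h | h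
      · exact ih v (Finset.mem_union.2 (Or.inr h))
      · exact ih v (Finset.mem_union.2 (Or.inl h))

/-- One-step propagation along an open edge from a touched node. -/
lemma step_trans : ∀ t w v, w ∈ uproc A (iota s r) t → r w = false → A w v = true →
    v ∈ uproc A (iota s r) (t+1) := by
  intro t
  induction t with
  | zero =>
    intro w v hw hrw hA
    by_cases hv : v ∈ uproc A (iota s r) 0
    · exact uproc_subset_succ A (iota s r) 0 hv
    · have hwI : w ∈ (sirProc A (iota s r) 0).1 := by
        rcases Finset.mem_union.1 hw with h | h
        · exact h
        · simp [sirProc] at h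
      refine Finset.mem_union.2 (Or.inl (mem_I_succ.2 ?_))
      exact ⟨fun h => hv (Finset.mem_union.2 (Or.inl h)),
        fun h => hv (Finset.mem_union.2 (Or.inr h)), w, hwI, hrw, hA, rfl⟩
  | succ t ih =>
    intro w v hw hrw hA
    rcases Finset.mem_union.1 hw with hI | hR
    · by_cases hv : v ∈ uproc A (iota s r) (t+1)
      · exact uproc_subset_succ A (iota s r) (t+1) hv
      · refine Finset.mem_union.2 (Or.inl (mem_I_succ.2 ?_))
        exact ⟨fun h => hv (Finset.mem_union.2 (Or.inl h)),
          fun h => hv (Finset.mem_union.2 (Or.inr h)), w, hI, hrw, hA, rfl⟩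
    · rw [R_succ] at hR
      have hw' : w ∈ uproc A (iota s r) t := by
        rcases Finset.mem_union.1 hR with h | h
        · exact Finset.mem_union.2 (Or.inr h)
        · exact Finset.mem_union.2 (Or.inl h)
      exact uproc_subset_succ A (iota s r) (t+1) (ih w v hw' hrw hA)

/-- Completeness: reachable by an open path implies eventually touched. -/
lemma path_reach : ∀ l (v : V), isPath A s v l → (∀ x ∈ l.dropLast, r x = false) →
    ∃ t, v ∈ uproc A (iota s r) t := by
  intro l
  induction l using List.reverseRecOn with
  | nil => intro v h _; exact absurd h.2.1 (by simp)
  | append_singleton l' x ih =>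
    intro v h hop
    have hx : x = v := by
      have := h.2.2; rw [List.getLast?_concat] at this; exact Option.some.inj this
    subst hx
    rcases eq_or_ne l' [] with hl | hl
    · subst hl
      have hxs : x = s := by
        have := h.2.1; simp at this; exact this
      exact ⟨0, Finset.mem_union.2 (Or.inl ((mem_I0 A s r).2 hxs))⟩
    · have hch := h.1
      simp only [List.Chain', List.isChain_append] at hch
      obtain ⟨hch', _, hlink⟩ := hch
      have hlast : l'.getLast? = some (l'.getLast hl) := List.getLast?_eq_getLast hl
      set w := l'.getLast hl with hw
      have hAwx : A w x = true := hlink w hlast x rfl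
      have hdrop : (l' ++ [x]).dropLast = l' := List.dropLast_concat
      have hpath' : isPath A s w l' := by
        refine ⟨hch', ?_, hlast⟩
        have := h.2.1
        rwa [List.head?_append_of_ne_nil _ hl] at this
      have hop' : ∀ y ∈ l'.dropLast, r y = false := by
        intro y hy
        exact hop y (by rw [hdrop]; exact (List.dropLast_sublist l').mem hy)
      obtain ⟨t, hwt⟩ := ih w hpath' hop'
      have hrw : r w = false := hop w (by rw [hdrop]; exact List.getLast_mem hl)
      exact ⟨t+1, step_trans A s r t w x hwt hrw hAwx⟩

/-- Core characterisation: `u` is ever infected iff there is an open path. -/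
lemma everInf_iff (u : V) : u ∈ everInf A (iota s r) ↔
    ∃ l, isPath A s u l ∧ ∀ x ∈ l.dropLast, r x = false := by
  constructor
  · intro h
    exact sound A s r (Fintype.card V) u h
  · rintro ⟨l, hp, hop⟩
    obtain ⟨t, ht⟩ := path_reach A s r l u hp hop
    exact uproc_subset_everInf A s r t ht

lemma removedSet_iota_mem {v : V} : v ∈ removedSet (iota s r) ↔ r v = true := by
  unfold removedSet; rw [Finset.mem_filter]; simp [iota]

/-- Non-infection is exactly the cut event. -/
lemma not_everInf_iff_cut (u : V) : u ∉ everInf A (iota s r) ↔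
    isCut A s u (removedSet (iota s r)) := by
  rw [everInf_iff]
  constructor
  · intro h l hp
    by_contra hno
    push_neg at hno
    refine h ⟨l, hp, fun x hx => ?_⟩
    have := hno x hx
    rw [removedSet_iota_mem] at this
    exact Bool.not_eq_true (r x) ▸ (by simpa using this)
  · rintro hc ⟨l, hp, hop⟩
    obtain ⟨x, hx, hxC⟩ := hc l hp
    rw [removedSet_iota_mem] at hxC
    rw [hop x hx] at hxC
    exact Bool.false_ne_true hxC

end Source

end SirAux

namespace SirAux

variable {V : Type*} [Fintype V] [DecidableEq V]

/-- Reduction of a coin-sum to a sum over removal coins only. -/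
lemma sum_coins (s : V) (g : V → ℝ) (f : Coins V → ℝ) :
    ∑ ω : Coins V, coinWeight (fun v => if v = s then 1 else 0) g (fun _ _ => 1) ω * f ω
      = ∑ r : V → Bool, (∏ v, if r v then g v else 1 - g v) * f (iota s r) := by
  rw [Fintype.sum_prod_type]
  rw [Finset.sum_eq_single_of_mem (fun v => decide (v = s)) (Finset.mem_univ _)]
  · rw [Fintype.sum_prod_type]
    apply Finset.sum_congr rfl
    intro r _
    rw [Finset.sum_eq_single_of_mem (fun _ _ => true) (Finset.mem_univ _)]
    · have h1 : (∏ v, if (iota s r).1 v then (if v = s then (1:ℝ) else 0)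
          else 1 - (if v = s then 1 else 0)) = 1 := by
        apply Finset.prod_eq_one
        intro v _
        by_cases hv : v = s <;> simp [iota, hv]
      have h3 : (∏ p : V, ∏ q : V, if (iota s r).2.2 p q then (1:ℝ) else 1 - 1) = 1 := by
        apply Finset.prod_eq_one
        intro p _
        apply Finset.prod_eq_one
        intro q _
        simp [iota]
      show coinWeight _ g _ ((fun v => decide (v = s)), r, fun _ _ => true) * _ = _
      rw [show ((fun v => decide (v = s)), r, fun _ _ => true) = iota s r from rfl]
      unfold coinWeight
      rw [h1, h3, one_mul, mul_one]
      rfl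
    · intro t _ ht
      obtain ⟨p, hp⟩ := Function.ne_iff.1 ht
      obtain ⟨q, hq⟩ := Function.ne_iff.1 hp
      have : t p q = false := by
        cases h : t p q
        · rfl
        · exact absurd h hq
      have hz : (∏ p' : V, ∏ q' : V,
          if ((fun v => decide (v = s)), r, t).2.2 p' q' then (1:ℝ) else 1 - 1) = 0 := by
        apply Finset.prod_eq_zero (Finset.mem_univ p)
        apply Finset.prod_eq_zero (Finset.mem_univ q)
        simp [this]
      unfold coinWeight
      rw [hz, mul_zero, zero_mul]
  · intro a _ ha
    apply Finset.sum_eq_zero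
    intro p _
    obtain ⟨v, hv⟩ := Function.ne_iff.1 ha
    have hfac : (if (a, p).1 v then (if v = s then (1:ℝ) else 0)
        else 1 - (if v = s then 1 else 0)) = 0 := by
      by_cases hvs : v = s
      · subst hvs
        have : a v = false := by
          cases h : a v
          · rfl
          · exact absurd h (by simpa using hv)
        simp [this]
      · have : a v = true := by
          cases h : a v
          · exact absurd h (by simpa [hvs] using hv)
          · rfl
        simp [this, hvs]
    have hz : (∏ w, if (a, p).1 w then (if w = s then (1:ℝ) else 0)
        else 1 - (if w = s then 1 else 0)) = 0 :=
      Finset.prod_eq_zero (Finset.mem_univ v) hfac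
    unfold coinWeight
    rw [hz, zero_mul, zero_mul, zero_mul]

/-- Splitting a sum over removal coins at the coordinate `z`, when the rest of the
summand does not depend on the coin at `z`. -/
lemma split_sum (z : V) (a b : ℝ) (φ : (V → Bool) → ℝ)
    (hφ : ∀ r c, φ (Function.update r z c) = φ r) :
    ∑ r : V → Bool, (if r z = true then a else b) * φ r
      = (a + b) * ∑ r : V → Bool, (if r z = true then φ r else 0) := by
  have h1 : ∑ r : V → Bool, (if r z = true then a else b) * φ r
      = ∑ r : V → Bool, ((if r z = true then a * φ r else 0)
          + (if r z = true then 0 else b * φ r)) := by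
    apply Finset.sum_congr rfl
    intro r _
    by_cases h : r z = true <;> simp [h]
  rw [h1, Finset.sum_add_distrib]
  have inv : Function.Involutive (fun r : V → Bool => Function.update r z (!(r z))) := by
    intro r
    funext v
    by_cases hv : v = z
    · subst hv; simp
    · simp [Function.update_of_ne hv]
  have h2 : ∑ r : V → Bool, (if r z = true then (0:ℝ) else b * φ r)
      = ∑ r : V → Bool, (if r z = true then b * φ r else 0) := by
    apply Fintype.sum_bijective _ inv.bijective
    intro r
    simp only [Function.update_self]
    cases hr : r z
    · simp [hr, hφ]
    · simp [hr, hφ]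
  rw [h2, ← Finset.sum_add_distrib, Finset.mul_sum]
  apply Finset.sum_congr rfl
  intro r _
  by_cases h : r z = true <;> simp [h] <;> ring

lemma cut_mono_erase {A : V → V → Bool} {s u z : V} {C : Finset V}
    (h : isCut A s u (C.erase z)) : isCut A s u C := by
  intro l hl
  obtain ⟨v, hv, hvC⟩ := h l hl
  exact ⟨v, hv, (Finset.mem_erase.1 hvC).2⟩

lemma not_Fz_of_false {A : V → V → Bool} {s u z : V} {r : V → Bool}
    (hr : r z = false) : ¬ Fz A s u z (iota s r) := by
  rintro ⟨hc, hnc⟩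
  have hznot : z ∉ removedSet (iota s r) := by
    rw [removedSet_iota_mem]
    simp [hr]
  rw [Finset.erase_eq_of_notMem hznot] at hnc
  exact hnc hc

lemma removedSet_update_erase (s z : V) (r : V → Bool) (c : Bool) :
    (removedSet (iota s (Function.update r z c))).erase z
      = (removedSet (iota s r)).erase z := by
  ext v
  simp only [Finset.mem_erase, removedSet_iota_mem]
  constructor
  · rintro ⟨hv, h⟩
    rw [Function.update_of_ne hv] at h
    exact ⟨hv, h⟩
  · rintro ⟨hv, h⟩
    rw [← Function.update_of_ne hv c r] at h
    exact ⟨hv, h⟩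

lemma Fzbar_update (A : V → V → Bool) (s u z : V) (r : V → Bool) (c : Bool) :
    Fzbar A s u z (iota s (Function.update r z c)) ↔ Fzbar A s u z (iota s r) := by
  unfold Fzbar
  rw [removedSet_update_erase]

end SirAux


open SirAux

/-- Single-node monotonicity with cut decomposition: with `τ ≡ 1`,
source `s`, and removal probabilities `γ₋ ≤ γ` differing only at the node `z`, the
probability that `u` is ultimately infected is at least as large under `γ₋`; moreover
the probability of non-infection decomposes as `P(F_z) + P(F_z̄)`, where
`P(F_z) = c₁ · γ(z)` with `c₁` independent of the value of the removal probability at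
`z`, and `P(F_z̄)` is independent of that value. -/
theorem sir_single_node_monotone_cut_decomposition
    (A : V → V → Bool) (s u z : V) (γm γ : V → ℝ)
    (hagree : ∀ v, v ≠ z → γm v = γ v) (hz : γm z ≤ γ z)
    (hγm : ∀ v, 0 ≤ γm v ∧ γm v ≤ 1) (hγ : ∀ v, 0 ≤ γ v ∧ γ v ≤ 1) :
    probInf A (fun v => if v = s then 1 else 0) γm (fun _ _ => 1) u ≥
      probInf A (fun v => if v = s then 1 else 0) γ (fun _ _ => 1) u ∧
    prEvent s γ (fun ω => u ∉ everInf A ω) =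
      prEvent s γ (Fz A s u z) + prEvent s γ (Fzbar A s u z) ∧
    ∃ c₁ c₂ : ℝ, ∀ g : V → ℝ, (∀ v, v ≠ z → g v = γ v) →
      prEvent s g (Fz A s u z) = c₁ * g z ∧ prEvent s g (Fzbar A s u z) = c₂ := by
  classical
  -- the weight of the coins away from `z`
  set w' : (V → Bool) → ℝ :=
    fun r => ∏ v ∈ Finset.univ.erase z, if r v then γ v else 1 - γ v with hw'def
  have hw'nonneg : ∀ r, 0 ≤ w' r := by
    intro r
    apply Finset.prod_nonneg
    intro v _
    by_cases h : r v
    · simp [h]; linarith [(hγ v).1]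
    · simp [h]; linarith [(hγ v).2]
  have hw'update : ∀ (r : V → Bool) (c : Bool), w' (Function.update r z c) = w' r := by
    intro r c
    apply Finset.prod_congr rfl
    intro v hv
    rw [Function.update_of_ne (Finset.ne_of_mem_erase hv)]
  have factor : ∀ (g : V → ℝ) (r : V → Bool), (∀ v, v ≠ z → g v = γ v) →
      (∏ v, if r v then g v else 1 - g v)
        = (if r z = true then g z else 1 - g z) * w' r := by
    intro g r hg
    rw [← Finset.mul_prod_erase Finset.univ _ (Finset.mem_univ z)]
    congr 1
    apply Finset.prod_congr rfl
    intro v hv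
    rw [hg v (Finset.ne_of_mem_erase hv)]
  set c₁ : ℝ := ∑ r : V → Bool,
    (if r z = true then w' r * (if Fz A s u z (iota s r) then 1 else 0) else 0) with hc₁def
  set c₂ : ℝ := ∑ r : V → Bool,
    (if r z = true then w' r * (if Fzbar A s u z (iota s r) then 1 else 0) else 0) with hc₂def
  set M₀ : ℝ := ∑ r : V → Bool, (if r z = true then w' r else 0) with hM₀def
  -- sum-level evaluations
  have sumFz : ∀ g : V → ℝ, (∀ v, v ≠ z → g v = γ v) →
      (∑ r : V → Bool, (∏ v, if r v then g v else 1 - g v) *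
        (if Fz A s u z (iota s r) then 1 else 0)) = c₁ * g z := by
    intro g hg
    have : (∑ r : V → Bool, (∏ v, if r v then g v else 1 - g v) *
        (if Fz A s u z (iota s r) then 1 else 0))
        = ∑ r : V → Bool, g z *
          (if r z = true then w' r * (if Fz A s u z (iota s r) then 1 else 0) else 0) := by
      apply Finset.sum_congr rfl
      intro r _
      rw [factor g r hg]
      by_cases hr : r z = true
      · simp only [hr, if_pos]
        ring
      · have hr' : r z = false := by simpa using hr
        rw [if_neg (not_Fz_of_false hr')]
        simp [hr]
    rw [this, ← Finset.mul_sum, ← hc₁def]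
    ring
  have sumFzbar : ∀ g : V → ℝ, (∀ v, v ≠ z → g v = γ v) →
      (∑ r : V → Bool, (∏ v, if r v then g v else 1 - g v) *
        (if Fzbar A s u z (iota s r) then 1 else 0)) = c₂ := by
    intro g hg
    have h1 : (∑ r : V → Bool, (∏ v, if r v then g v else 1 - g v) *
        (if Fzbar A s u z (iota s r) then 1 else 0))
        = ∑ r : V → Bool, (if r z = true then g z else 1 - g z) *
            (w' r * (if Fzbar A s u z (iota s r) then 1 else 0)) := by
      apply Finset.sum_congr rfl
      intro r _
      rw [factor g r hg, mul_assoc]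
    rw [h1, split_sum z (g z) (1 - g z)
      (fun r => w' r * (if Fzbar A s u z (iota s r) then 1 else 0))
      (by
        intro r c
        rw [hw'update]
        congr 1
        exact if_congr (Fzbar_update A s u z r c) rfl rfl)]
    rw [show g z + (1 - g z) = 1 by ring, one_mul]
  have sumM : ∀ g : V → ℝ, (∀ v, v ≠ z → g v = γ v) →
      (∑ r : V → Bool, (∏ v, if r v then g v else 1 - g v)) = M₀ := by
    intro g hg
    have h1 : (∑ r : V → Bool, (∏ v, if r v then g v else 1 - g v))
        = ∑ r : V → Bool, (if r z = true then g z else 1 - g z) * w' r := by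
      apply Finset.sum_congr rfl
      intro r _
      exact factor g r hg
    rw [h1, split_sum z (g z) (1 - g z) w' (fun r c => hw'update r c)]
    rw [show g z + (1 - g z) = 1 by ring, one_mul]
  -- indicator decomposition
  have ind_decomp : ∀ r : V → Bool,
      (if u ∈ everInf A (iota s r) then (1:ℝ) else 0)
        = 1 - ((if Fz A s u z (iota s r) then (1:ℝ) else 0)
             + (if Fzbar A s u z (iota s r) then (1:ℝ) else 0)) := by
    intro r
    by_cases hbar : isCut A s u ((removedSet (iota s r)).erase z)
    · have hcut : isCut A s u (removedSet (iota s r)) := cut_mono_erase hbar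
      have hnin : u ∉ everInf A (iota s r) := (not_everInf_iff_cut A s r u).2 hcut
      have hFz : ¬ Fz A s u z (iota s r) := fun h => h.2 hbar
      have hFzbar : Fzbar A s u z (iota s r) := hbar
      rw [if_neg hnin, if_neg hFz, if_pos hFzbar]
      ring
    · by_cases hcut : isCut A s u (removedSet (iota s r))
      · have hnin : u ∉ everInf A (iota s r) := (not_everInf_iff_cut A s r u).2 hcut
        have hFz : Fz A s u z (iota s r) := ⟨hcut, hbar⟩
        rw [if_neg hnin, if_pos hFz, if_neg (show ¬ Fzbar A s u z (iota s r) from hbar)]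
        ring
      · have hin : u ∈ everInf A (iota s r) := by
          by_contra h
          exact hcut ((not_everInf_iff_cut A s r u).1 h)
        have hFz : ¬ Fz A s u z (iota s r) := fun h => hcut h.1
        rw [if_pos hin, if_neg hFz, if_neg (show ¬ Fzbar A s u z (iota s r) from hbar)]
        ring
  -- evaluation of probInf
  have probInf_eval : ∀ g : V → ℝ, (∀ v, v ≠ z → g v = γ v) →
      probInf A (fun v => if v = s then 1 else 0) g (fun _ _ => 1) u
        = M₀ - (c₁ * g z + c₂) := by
    intro g hg
    have h0 : probInf A (fun v => if v = s then 1 else 0) g (fun _ _ => 1) u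
        = ∑ r : V → Bool, (∏ v, if r v then g v else 1 - g v) *
            (if u ∈ everInf A (iota s r) then 1 else 0) := by
      simp only [probInf]
      exact sum_coins s g (fun ω => if u ∈ everInf A ω then 1 else 0)
    rw [h0]
    have h1 : ∀ r : V → Bool, (∏ v, if r v then g v else 1 - g v) *
        (if u ∈ everInf A (iota s r) then (1:ℝ) else 0)
        = (∏ v, if r v then g v else 1 - g v)
          - ((∏ v, if r v then g v else 1 - g v) *
              (if Fz A s u z (iota s r) then 1 else 0)
            + (∏ v, if r v then g v else 1 - g v) *
              (if Fzbar A s u z (iota s r) then 1 else 0)) := by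
      intro r
      rw [ind_decomp r]
      ring
    rw [Finset.sum_congr rfl (fun r _ => h1 r), Finset.sum_sub_distrib,
      Finset.sum_add_distrib, sumM g hg, sumFz g hg, sumFzbar g hg]
  refine ⟨?_, ?_, c₁, c₂, ?_⟩
  · -- monotonicity
    have hγmeval := probInf_eval γm hagree
    have hγeval := probInf_eval γ (fun v _ => rfl)
    have hc₁ : 0 ≤ c₁ := by
      apply Finset.sum_nonneg
      intro r _
      by_cases hr : r z = true
      · rw [if_pos hr]
        apply mul_nonneg (hw'nonneg r)
        by_cases h : Fz A s u z (iota s r) <;> simp [h]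
      · rw [if_neg hr]
    rw [ge_iff_le, hγmeval, hγeval]
    have := mul_le_mul_of_nonneg_left hz hc₁
    linarith
  · -- decomposition
    simp only [prEvent]
    rw [sum_coins s γ (fun ω => @ite ℝ (u ∉ everInf A ω) (Classical.propDecidable _) 1 0),
      sum_coins s γ (fun ω => if Fz A s u z ω then 1 else 0),
      sum_coins s γ (fun ω => if Fzbar A s u z ω then 1 else 0),
      ← Finset.sum_add_distrib]
    apply Finset.sum_congr rfl
    intro r _
    have hd := ind_decomp r
    by_cases hin : u ∈ everInf A (iota s r)
    · rw [if_pos hin] at hd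
      have hab : (if Fz A s u z (iota s r) then (1:ℝ) else 0)
          + (if Fzbar A s u z (iota s r) then (1:ℝ) else 0) = 0 := by linarith
      rw [if_neg (show ¬ (u ∉ everInf A (iota s r)) from fun h => h hin), ← mul_add, hab]
    · rw [if_neg hin] at hd
      have hab : (if Fz A s u z (iota s r) then (1:ℝ) else 0)
          + (if Fzbar A s u z (iota s r) then (1:ℝ) else 0) = 1 := by linarith
      rw [if_pos hin, ← mul_add, hab]
  · -- the constants
    intro g hg
    constructor
    · simp only [prEvent]
      rw [sum_coins s g (fun ω => if Fz A s u z ω then 1 else 0)]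
      exact sumFz g hg
    · simp only [prEvent]
      rw [sum_coins s g (fun ω => if Fzbar A s u z ω then 1 else 0)]
      exact sumFzbar g hg
end

section
/- (Lemma: γ-monotonicity of infection probability.) Consider two discrete-time SIR epidemics on the same directed graph G, both originating at a single source node s and both with transmission probability 1 on every edge, with removal probability functions γ₋ and γ satisfying γ₋(v) ≤ γ(v) for all nodes v. Then for every node u, the probability that u is ultimately infected is at least as large under γ₋ as under γ: P_{γ₋}(u ∈ R_n) ≥ P_γ(u ∈ R_n). -/
open Finset

variable {V : Type*} [Fintype V] [DecidableEq V]

section SirAux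

variable {V : Type*} [Fintype V] [DecidableEq V]

/-- ever-infected by time `t` -/
def eSet (A : V → V → Bool) (ω : Coins V) (t : ℕ) : Finset V :=
  (sirProc A ω t).1 ∪ (sirProc A ω t).2

lemma everInf_eq_eSet (A : V → V → Bool) (ω : Coins V) :
    everInf A ω = eSet A ω (Fintype.card V) := rfl

lemma eSet_succ (A : V → V → Bool) (ω : Coins V) (t : ℕ) :
    eSet A ω (t+1) = (sirProc A ω (t+1)).1 ∪ eSet A ω t := by
  show _ ∪ ((sirProc A ω t).2 ∪ (sirProc A ω t).1) = _
  rw [eSet]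
  ext v; simp; tauto

lemma eSet_mono (A : V → V → Bool) (ω : Coins V) {t m : ℕ} (h : t ≤ m) :
    eSet A ω t ⊆ eSet A ω m := by
  induction m with
  | zero => simp_all
  | succ m ih =>
    rcases Nat.lt_or_ge t (m+1) with h' | h'
    · exact (ih (Nat.lt_succ_iff.mp h')).trans (by rw [eSet_succ]; exact subset_union_right)
    · have : t = m + 1 := le_antisymm h h'
      subst this; rfl

lemma mem_I_of_mem_eSet (A : V → V → Bool) (ω : Coins V) {t : ℕ} {v : V}
    (h : v ∈ eSet A ω t) : ∃ j ≤ t, v ∈ (sirProc A ω j).1 := by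
  induction t with
  | zero =>
    rw [eSet] at h; simp only [mem_union] at h
    rcases h with h | h
    · exact ⟨0, le_refl _, h⟩
    · simp [sirProc] at h
  | succ t ih =>
    rw [eSet_succ, mem_union] at h
    rcases h with h | h
    · exact ⟨t+1, le_refl _, h⟩
    · obtain ⟨j, hj, hv⟩ := ih h
      exact ⟨j, hj.trans (Nat.le_succ _), hv⟩

lemma I_succ_not_mem_eSet (A : V → V → Bool) (ω : Coins V) {t : ℕ} {v : V}
    (h : v ∈ (sirProc A ω (t+1)).1) : v ∉ eSet A ω t := by
  have : v ∈ univ.filter (fun v => v ∉ (sirProc A ω t).1 ∧ v ∉ (sirProc A ω t).2 ∧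
      ∃ u ∈ (sirProc A ω t).1, ω.2.1 u = false ∧ A u v = true ∧ ω.2.2 u v = true) := h
  simp only [mem_filter] at this
  rw [eSet, mem_union]
  tauto

lemma card_growth (A : V → V → Bool) (ω : Coins V) (t : ℕ)
    (h : ∀ j ≤ t, ((sirProc A ω j).1).Nonempty) : t + 1 ≤ (eSet A ω t).card := by
  induction t with
  | zero =>
    obtain ⟨v, hv⟩ := h 0 le_rfl
    have : v ∈ eSet A ω 0 := by rw [eSet, mem_union]; exact Or.inl hv
    exact Finset.card_pos.mpr ⟨v, this⟩
  | succ t ih =>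
    have ht := ih (fun j hj => h j (hj.trans (Nat.le_succ _)))
    obtain ⟨v, hv⟩ := h (t+1) le_rfl
    have hvn : v ∉ eSet A ω t := I_succ_not_mem_eSet A ω hv
    have hsub : insert v (eSet A ω t) ⊆ eSet A ω (t+1) := by
      rw [eSet_succ]
      intro x hx
      rcases Finset.mem_insert.mp hx with rfl | hx
      · exact mem_union.mpr (Or.inl hv)
      · exact mem_union.mpr (Or.inr hx)
    have hcard := Finset.card_le_card hsub
    rw [Finset.card_insert_of_notMem hvn] at hcard
    omega

lemma exists_I_empty (A : V → V → Bool) (ω : Coins V) :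
    ∃ t ≤ Fintype.card V, (sirProc A ω t).1 = ∅ := by
  by_contra hc
  push_neg at hc
  have h : ∀ j ≤ Fintype.card V, ((sirProc A ω j).1).Nonempty :=
    fun j hj => hc j hj
  have := card_growth A ω (Fintype.card V) h
  have hle : (eSet A ω (Fintype.card V)).card ≤ Fintype.card V :=
    Finset.card_le_card (Finset.subset_univ _) |>.trans (by simp)
  omega

lemma I_empty_stable (A : V → V → Bool) (ω : Coins V) {t : ℕ}
    (h : (sirProc A ω t).1 = ∅) :
    ∀ k, (sirProc A ω (t + k)).1 = ∅ ∧ (sirProc A ω (t + k)).2 = (sirProc A ω t).2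
  | 0 => ⟨h, rfl⟩
  | k + 1 => by
    obtain ⟨h1, h2⟩ := I_empty_stable A ω h k
    constructor
    · show (sirStep A ω (sirProc A ω (t+k))).1 = ∅
      rw [sirStep]
      ext v; simp [h1]
    · show (sirStep A ω (sirProc A ω (t+k))).2 = _
      rw [sirStep]
      simp [h1, h2]

lemma eSet_stab (A : V → V → Bool) (ω : Coins V) :
    eSet A ω (Fintype.card V + 1) = eSet A ω (Fintype.card V) := by
  obtain ⟨t, ht, hI⟩ := exists_I_empty A ω
  have key : ∀ k, eSet A ω (t + k) = eSet A ω t := by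
    intro k
    obtain ⟨h1, h2⟩ := I_empty_stable A ω hI k
    rw [eSet, eSet, h1, h2, hI]
  have e1 : eSet A ω (Fintype.card V + 1) = eSet A ω t := by
    have : Fintype.card V + 1 = t + (Fintype.card V + 1 - t) := by omega
    rw [this, key]
  have e2 : eSet A ω (Fintype.card V) = eSet A ω t := by
    have : Fintype.card V = t + (Fintype.card V - t) := by omega
    rw [this, key]
  rw [e1, e2]

lemma everInf_closed (A : V → V → Bool) (ω : Coins V)
    (hτ : ∀ a b, ω.2.2 a b = true) {x y : V}
    (hx : x ∈ everInf A ω) (hrx : ω.2.1 x = false) (hA : A x y = true) :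
    y ∈ everInf A ω := by
  rw [everInf_eq_eSet] at hx ⊢
  obtain ⟨j, hj, hxI⟩ := mem_I_of_mem_eSet A ω hx
  by_cases hy : y ∈ eSet A ω j
  · exact eSet_mono A ω hj hy
  · have hy1 : y ∉ (sirProc A ω j).1 := fun h => hy (mem_union.mpr (Or.inl h))
    have hy2 : y ∉ (sirProc A ω j).2 := fun h => hy (mem_union.mpr (Or.inr h))
    have hyI : y ∈ (sirProc A ω (j+1)).1 := by
      show y ∈ univ.filter _
      rw [mem_filter]
      exact ⟨mem_univ _, hy1, hy2, x, hxI, hrx, hA, hτ x y⟩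
    have : y ∈ eSet A ω (j+1) := by rw [eSet_succ, mem_union]; exact Or.inl hyI
    have := eSet_mono A ω (Nat.succ_le_succ hj) this
    rwa [eSet_stab] at this

lemma everInf_anti (A : V → V → Bool) (i : V → Bool) (r r' : V → Bool)
    (hrr : ∀ v, r' v = false → r v = false) :
    everInf A (i, r', fun _ _ => true) ⊆ everInf A (i, r, fun _ _ => true) := by
  set ω : Coins V := (i, r, fun _ _ => true) with hω
  set ω' : Coins V := (i, r', fun _ _ => true) with hω'
  have key : ∀ t, eSet A ω' t ⊆ everInf A ω := by
    intro t
    induction t with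
    | zero =>
      have h0 : sirProc A ω' 0 = sirProc A ω 0 := by simp [sirProc]; rfl
      rw [eSet, h0, everInf_eq_eSet]
      exact eSet_mono A ω (Nat.zero_le _)
    | succ t ih =>
      rw [eSet_succ]
      intro v hv
      rcases mem_union.mp hv with hv | hv
      · have : v ∈ univ.filter (fun v => v ∉ (sirProc A ω' t).1 ∧ v ∉ (sirProc A ω' t).2 ∧
            ∃ u ∈ (sirProc A ω' t).1, ω'.2.1 u = false ∧ A u v = true ∧ ω'.2.2 u v = true) := hv
        rw [mem_filter] at this
        obtain ⟨-, -, -, x, hxI, hrx, hA, -⟩ := this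
        have hxE : x ∈ everInf A ω := ih (mem_union.mpr (Or.inl hxI))
        exact everInf_closed A ω (fun _ _ => rfl) hxE (hrr x hrx) hA
      · exact ih hv
  rw [everInf_eq_eSet]
  exact key _

/-- weight of a removal-coin outcome -/
def gWt (γ : V → ℝ) (r : V → Bool) : ℝ := ∏ v, if r v then γ v else 1 - γ v

/-- `probInf` reduced to a sum over removal coins only -/
def probR (A : V → V → Bool) (s : V) (γ : V → ℝ) (u : V) : ℝ :=
  ∑ r : V → Bool, gWt γ r *
    (if u ∈ everInf A (fun v => decide (v = s), r, fun _ _ => true) then (1:ℝ) else 0)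

lemma sigma_prod (s : V) (a : V → Bool) :
    (∏ v, if a v then (if v = s then (1:ℝ) else 0) else 1 - (if v = s then 1 else 0))
      = if a = (fun v => decide (v = s)) then 1 else 0 := by
  split_ifs with h
  · subst h
    apply Finset.prod_eq_one
    intro v _
    by_cases hv : v = s <;> simp [hv]
  · have : ∃ v, a v ≠ decide (v = s) := by
      by_contra hc; push_neg at hc; exact h (funext hc)
    obtain ⟨v, hv⟩ := this
    apply Finset.prod_eq_zero (mem_univ v)
    cases hav : a v with
    | true =>
      have : v ≠ s := by intro hvs; rw [hav, hvs] at hv; simp at hv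
      simp [hav, this]
    | false =>
      have : v = s := by
        by_contra hvs; rw [hav] at hv; simp [hvs] at hv
      simp [hav, this]

lemma tau_prod (c : V → V → Bool) :
    (∏ a, ∏ b, if c a b then (1:ℝ) else 1 - 1)
      = if c = (fun _ _ => true) then 1 else 0 := by
  split_ifs with h
  · subst h; simp
  · have : ∃ a b, c a b = false := by
      by_contra hc; push_neg at hc
      exact h (funext fun a => funext fun b => by simpa using (hc a b))
    obtain ⟨a, b, hab⟩ := this
    apply Finset.prod_eq_zero (mem_univ a)
    apply Finset.prod_eq_zero (mem_univ b)
    simp [hab]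

lemma probInf_eq (A : V → V → Bool) (s : V) (γ : V → ℝ) (u : V) :
    probInf A (fun v => if v = s then 1 else 0) γ (fun _ _ => 1) u = probR A s γ u := by
  rw [probInf, probR]
  simp only [coinWeight, Fintype.sum_prod_type, sigma_prod, tau_prod, ite_mul, mul_ite,
    one_mul, zero_mul, mul_zero, mul_one, Finset.sum_ite_irrel, Finset.sum_const_zero,
    Finset.sum_ite_eq', Finset.mem_univ, if_true, gWt]
  rw [Fintype.sum_eq_single (fun v => decide (v = s) : V → Bool)
      (fun b hb => by simp [hb])]
  apply Finset.sum_congr rfl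
  intro b _
  rw [Fintype.sum_eq_single (fun _ _ => true : V → V → Bool)
      (fun c hc => by simp [hc])]
  simp

lemma probR_update_le (A : V → V → Bool) (s u : V) (γh : V → ℝ)
    (h0 : ∀ v, 0 ≤ γh v) (h1 : ∀ v, γh v ≤ 1) (a : V) (δ : ℝ)
    (hδ0 : 0 ≤ δ) (hδ : δ ≤ γh a) :
    probR A s γh u ≤ probR A s (Function.update γh a δ) u := by
  set ind : (V → Bool) → ℝ := fun r =>
    if u ∈ everInf A (fun v => decide (v = s), r, fun _ _ => true) then (1:ℝ) else 0 with hind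
  set Q : (V → Bool) → ℝ := fun r => ∏ v ∈ univ.erase a, (if r v then γh v else 1 - γh v)
    with hQ
  have hQnn : ∀ r, 0 ≤ Q r := by
    intro r
    apply Finset.prod_nonneg
    intro v _
    cases hrv : r v <;> simp [hrv] <;> [linarith [h1 v]; exact h0 v]
  rw [← sub_nonneg, probR, probR, ← Finset.sum_sub_distrib]
  have key : ∀ r : V → Bool,
      gWt (Function.update γh a δ) r * ind r - gWt γh r * ind r
        = (γh a - δ) * ((if r a then (-1:ℝ) else 1) * (Q r * ind r)) := by
    intro r
    have e1 : gWt γh r = (if r a then γh a else 1 - γh a) * Q r := by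
      rw [gWt, ← Finset.mul_prod_erase univ _ (mem_univ a)]
    have e2 : gWt (Function.update γh a δ) r = (if r a then δ else 1 - δ) * Q r := by
      rw [gWt, ← Finset.mul_prod_erase univ _ (mem_univ a)]
      congr 1
      · simp [Function.update]
      · apply Finset.prod_congr rfl
        intro v hv
        have : v ≠ a := (Finset.mem_erase.mp hv).1
        simp [Function.update, this]
    rw [e1, e2]
    cases hra : r a <;> simp [hra] <;> ring
  change 0 ≤ ∑ r : V → Bool, (gWt (Function.update γh a δ) r * ind r - gWt γh r * ind r)
  simp only [key]
  rw [← Finset.mul_sum]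
  apply mul_nonneg (by linarith)
  set e := Equiv.funSplitAt a Bool with he
  set f : (V → Bool) → ℝ := fun r => (if r a then (-1:ℝ) else 1) * (Q r * ind r) with hf
  show 0 ≤ ∑ r : V → Bool, f r
  rw [← Equiv.sum_comp e.symm f, Fintype.sum_prod_type, Fintype.sum_bool,
    ← Finset.sum_add_distrib]
  apply Finset.sum_nonneg
  intro q _
  set rT := e.symm (true, q) with hrT
  set rF := e.symm (false, q) with hrF
  have hTa : rT a = true := by
    rw [hrT, he]; simp [Equiv.funSplitAt, Equiv.piSplitAt_symm_apply]
  have hFa : rF a = false := by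
    rw [hrF, he]; simp [Equiv.funSplitAt, Equiv.piSplitAt_symm_apply]
  have hagree : ∀ v, v ≠ a → rT v = rF v := by
    intro v hv
    rw [hrT, hrF, he]
    simp [Equiv.funSplitAt, Equiv.piSplitAt_symm_apply, hv]
  have hQeq : Q rT = Q rF := by
    rw [hQ]
    apply Finset.prod_congr rfl
    intro v hv
    rw [hagree v (Finset.mem_erase.mp hv).1]
  have hindle : ind rT ≤ ind rF := by
    have hsub := everInf_anti A (fun v => decide (v = s)) rF rT
      (fun v hv => by
        by_cases hva : v = a
        · subst hva; rw [hTa] at hv; exact absurd hv (by simp)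
        · rw [← hagree v hva]; exact hv)
    rw [hind]
    by_cases hu : u ∈ everInf A (fun v => decide (v = s), rT, fun _ _ => true)
    · simp only [hu, if_true, hsub hu, if_true]; exact le_refl _
    · simp only [hu, if_false]
      split <;> norm_num
  rw [hf]
  norm_num [hTa, hFa]
  have := mul_le_mul_of_nonneg_left hindle (hQnn rT)
  rw [hQeq] at this ⊢
  nlinarith [hQnn rF]

lemma probR_mono (A : V → V → Bool) (s : V) (γm γ : V → ℝ)
    (hγm : ∀ v, 0 ≤ γm v) (hle : ∀ v, γm v ≤ γ v) (hγ : ∀ v, γ v ≤ 1) (u : V) :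
    probR A s γ u ≤ probR A s γm u := by
  have key : ∀ S : Finset V,
      probR A s γ u ≤ probR A s (fun v => if v ∈ S then γm v else γ v) u := by
    intro S
    induction S using Finset.induction_on with
    | empty => simp
    | @insert a S ha ih =>
      set γS : V → ℝ := fun v => if v ∈ S then γm v else γ v with hγS
      have hupd : (fun v => if v ∈ insert a S then γm v else γ v)
          = Function.update γS a (γm a) := by
        funext v
        by_cases hva : v = a
        · subst hva; simp [Function.update]
        · simp [Function.update, hva, Finset.mem_insert]; rfl
      rw [hupd]
      refine ih.trans (probR_update_le A s u γS ?_ ?_ a (γm a) (hγm a) ?_)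
      · intro v
        by_cases hv : v ∈ S <;> simp only [hγS, hv, if_true, if_false]
        · exact hγm v
        · exact (hγm v).trans (hle v)
      · intro v
        by_cases hv : v ∈ S <;> simp only [hγS, hv, if_true, if_false]
        · exact (hle v).trans (hγ v)
        · exact hγ v
      · by_cases ha' : a ∈ S <;> simp only [hγS, ha', if_true, if_false]
        · exact le_refl _
        · exact hle a
  have h := key Finset.univ
  have : (fun v => if v ∈ (Finset.univ : Finset V) then γm v else γ v) = γm := by
    funext v; simp
  rwa [this] at h

end SirAux

/-- **γ-monotonicity lemma.** Two SIR epidemics on the same directed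
graph, both starting at the single source `s` and with transmission probability `1`
on every edge, with removal probabilities `γ₋ ≤ γ` pointwise: every node `u` is at
least as likely to be ultimately infected under `γ₋` as under `γ`. -/
theorem sir_gamma_monotone {V : Type*} [Fintype V] [DecidableEq V]
    (A : V → V → Bool) (s : V) (γm γ : V → ℝ)
    (hγm : ∀ v, 0 ≤ γm v) (hle : ∀ v, γm v ≤ γ v) (hγ : ∀ v, γ v ≤ 1) (u : V) :
    probInf A (fun v => if v = s then 1 else 0) γm (fun _ _ => 1) u ≥
      probInf A (fun v => if v = s then 1 else 0) γ (fun _ _ => 1) u := by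
  rw [ge_iff_le, probInf_eq, probInf_eq]
  exact probR_mono A s γm γ hγm hle hγ u
end

section
/- (Reduction of transmission to removal.) Given a discrete-time SIR epidemic E on graph G(V,A) with transmission probabilities τ and removal probabilities γ starting from source s, construct graph G'' by replacing every edge e=(v,w) with a two-hop path (v,h_e),(h_e,w) through a new helper node h_e, setting all transmission probabilities to 1, removal probability γ̂(h_e) = 1 − τ(e) for helper nodes, and γ̂(v) = γ(v) for original nodes. Then: (a) the probability that an infected v transmits to w in G'' equals τ(v,w); (b) node v ∈ V is infected at time t in E iff it is infected at time 2t in the new epidemic; and (c) the expected number of ultimately infected original (non-helper) nodes in the new epidemic equals the expected final extent E(|R_n|) of E. -/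
open Finset

variable {V : Type*} [Fintype V] [DecidableEq V]

variable {V : Type*} [Fintype V] [DecidableEq V]

/-- The edges of the directed graph given by `A`. -/
abbrev EdgeOf (A : V → V → Bool) := {e : V × V // A e.1 e.2 = true}

/-- Vertices of the reduced graph: original nodes plus one helper node per edge. -/
abbrev HelperV (A : V → V → Bool) := V ⊕ EdgeOf A

/-- Adjacency of the reduced graph: each edge `e = (v,w)` is replaced by the
two-hop path `(v, h_e), (h_e, w)` through the helper node `h_e`. -/
def helperAdj (A : V → V → Bool) : HelperV A → HelperV A → Bool
  | .inl v, .inr e => decide (e.1.1 = v)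
  | .inr e, .inl w => decide (e.1.2 = w)
  | _, _ => false

/-- Removal probabilities on the reduced graph: `γ̂(h_e) = 1 - τ(e)` for helper
nodes, `γ̂(v) = γ(v)` for original nodes. -/
def helperGamma (A : V → V → Bool) (γ : V → ℝ) (τ : V → V → ℝ) : HelperV A → ℝ
  | .inl v => γ v
  | .inr e => 1 - τ e.1.1 e.1.2

/-- The natural coupling of coins: original nodes keep their coins; the helper
`h_e` is removed-before-transmitting iff edge `e` fails to transmit in the original
epidemic; all transmissions in the reduced graph succeed. -/
def liftCoins (A : V → V → Bool) (ω : Coins V) : Coins (HelperV A) :=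
  (fun x => match x with | .inl v => ω.1 v | .inr _ => false,
   fun x => match x with | .inl v => ω.2.1 v | .inr e => ! ω.2.2 e.1.1 e.1.2,
   fun _ _ => true)



open Finset

section SumMachinery
variable {α β : Type*} [Fintype α] [DecidableEq α] [Fintype β] [DecidableEq β]

lemma sum_boolfun_prod (g : α → Bool → ℝ) :
    ∑ f : α → Bool, ∏ a, g a (f a) = ∏ a, (g a true + g a false) := by
  rw [show (∏ a, (g a true + g a false)) = ∏ a, ∑ b : Bool, g a b by
        simp [Fintype.sum_bool, add_comm]]
  rw [Fintype.prod_sum]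

lemma sum_to_one (p : α → ℝ) :
    ∑ f : α → Bool, ∏ a, (if f a then p a else 1 - p a) = 1 := by
  rw [sum_boolfun_prod (fun a b => if b then p a else 1 - p a)]
  simp

lemma sum_delta (a0 : α → Bool) (w : α → Bool → ℝ) (F : (α → Bool) → ℝ)
    (hw1 : ∀ a, w a (a0 a) = 1) (hw0 : ∀ a b, b ≠ a0 a → w a b = 0) :
    ∑ f : α → Bool, (∏ a, w a (f a)) * F f = F a0 := by
  rw [Finset.sum_eq_single a0]
  · simp [hw1]
  · intro f _ hf
    obtain ⟨a, ha⟩ := Function.ne_iff.1 hf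
    rw [Finset.prod_eq_zero (Finset.mem_univ a) (hw0 a _ ha), zero_mul]
  · intro h; exact absurd (Finset.mem_univ _) h

lemma triple_sum_factor {A B C : Type*} [Fintype A] [Fintype B] [Fintype C]
    (f : A → ℝ) (g : B → ℝ) (h : C → ℝ) :
    ∑ a : A, ∑ b : B, ∑ c : C, f a * g b * h c = (∑ a, f a) * (∑ b, g b) * (∑ c, h c) := by
  symm
  simp only [Finset.sum_mul, Finset.mul_sum]
  rw [Finset.sum_comm]
  exact (Finset.sum_congr rfl (fun b _ => Finset.sum_comm)).trans Finset.sum_comm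

end SumMachinery

section Curry
variable {α β : Type*} [Fintype α] [DecidableEq α] [Fintype β] [DecidableEq β]

lemma sum_curry (F : (α → β → Bool) → ℝ) :
    ∑ f : α → β → Bool, F f = ∑ g : α × β → Bool, F (fun a b => g (a, b)) :=
  (Equiv.sum_comp (Equiv.curry α β Bool) F).symm

lemma sum_to_one2 (p : α → β → ℝ) :
    ∑ f : α → β → Bool, ∏ a, ∏ b, (if f a b then p a b else 1 - p a b) = 1 := by
  rw [sum_curry (fun f => ∏ a, ∏ b, (if f a b then p a b else 1 - p a b))]
  trans ∑ g : α × β → Bool, ∏ x : α × β, (if g x then p x.1 x.2 else 1 - p x.1 x.2)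
  · exact Finset.sum_congr rfl fun g _ =>
      (Fintype.prod_prod_type (fun x : α × β => if g x then p x.1 x.2 else 1 - p x.1 x.2)).symm
  · exact sum_to_one (fun x : α × β => p x.1 x.2)

lemma sum_delta2 (c0 : α → β → Bool) (w : α → β → Bool → ℝ) (F : (α → β → Bool) → ℝ)
    (hw1 : ∀ a b, w a b (c0 a b) = 1) (hw0 : ∀ a b x, x ≠ c0 a b → w a b x = 0) :
    ∑ f : α → β → Bool, (∏ a, ∏ b, w a b (f a b)) * F f = F c0 := by
  rw [sum_curry (fun f => (∏ a, ∏ b, w a b (f a b)) * F f)]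
  trans ∑ g : α × β → Bool, (∏ x : α × β, w x.1 x.2 (g x)) * F (fun a b => g (a, b))
  · exact Finset.sum_congr rfl fun g _ => by
      rw [Fintype.prod_prod_type (fun x : α × β => w x.1 x.2 (g x))]
  · exact sum_delta (fun x => c0 x.1 x.2) (fun x b => w x.1 x.2 b)
      (fun g => F (fun a b => g (a, b))) (fun x => hw1 x.1 x.2) (fun x b h => hw0 x.1 x.2 b h)

lemma sum_split (p : α → Prop) [DecidablePred p] (w : α → Bool → ℝ)
    (hw : ∀ a, ¬ p a → w a true + w a false = 1) (g : (α → Bool) → ℝ)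
    (hg : ∀ f f', (∀ a, p a → f a = f' a) → g f = g f') :
    ∑ f : α → Bool, (∏ a, w a (f a)) * g f
      = ∑ f : {a // p a} → Bool, (∏ a : {a // p a}, w a.1 (f a)) *
          g (fun a => if h : p a then f ⟨a, h⟩ else true) := by
  classical
  let e : (({a // p a} → Bool) × ({a // ¬ p a} → Bool)) ≃ (α → Bool) :=
    { toFun := fun fg a => if h : p a then fg.1 ⟨a, h⟩ else fg.2 ⟨a, h⟩
      invFun := fun f => (fun a => f a.1, fun a => f a.1)
      left_inv := by
        rintro ⟨f1, f2⟩
        ext a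
        · exact dif_pos a.2
        · exact dif_neg a.2
      right_inv := by intro f; funext a; by_cases h : p a <;> simp [h] }
  have he : ∀ f1 f2 a, e (f1, f2) a = if h : p a then f1 ⟨a, h⟩ else f2 ⟨a, h⟩ :=
    fun _ _ _ => rfl
  rw [← Equiv.sum_comp e (fun f => (∏ a, w a (f a)) * g f), Fintype.sum_prod_type]
  have key : ∀ f1 f2, (∏ a, w a (e (f1, f2) a)) * g (e (f1, f2))
      = ((∏ a : {a // p a}, w a.1 (f1 a)) *
          g (fun a => if h : p a then f1 ⟨a, h⟩ else true)) *
        ∏ a : {a // ¬ p a}, w a.1 (f2 a) := by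
    intro f1 f2
    rw [← Fintype.prod_subtype_mul_prod_subtype p (fun a => w a (e (f1, f2) a))]
    have h1 : ∀ a : {a // p a}, w a.1 (e (f1, f2) a.1) = w a.1 (f1 a) := by
      intro a; rw [he]; rw [dif_pos a.2]
    have h2 : ∀ a : {a // ¬ p a}, w a.1 (e (f1, f2) a.1) = w a.1 (f2 a) := by
      intro a; rw [he]; rw [dif_neg a.2]
    rw [Finset.prod_congr rfl fun a _ => h1 a, Finset.prod_congr rfl fun a _ => h2 a,
      hg (e (f1, f2)) (fun a => if h : p a then f1 ⟨a, h⟩ else true)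
        (fun a ha => by rw [he]; simp only [dif_pos ha])]
    ring
  simp_rw [key, ← Finset.mul_sum]
  have hone : ∑ f2 : {a // ¬ p a} → Bool, ∏ a, w a.1 (f2 a) = 1 := by
    rw [sum_boolfun_prod]
    exact Finset.prod_eq_one fun a _ => hw a.1 a.2
  simp only [hone, mul_one]
section Proc
variable {W : Type*} [Fintype W] [DecidableEq W]

lemma mem_proc_succ_fst (B : W → W → Bool) (ω : Coins W) (t : ℕ) (x : W) :
    x ∈ (sirProc B ω (t + 1)).1 ↔ x ∉ (sirProc B ω t).1 ∧ x ∉ (sirProc B ω t).2 ∧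
      ∃ u ∈ (sirProc B ω t).1, ω.2.1 u = false ∧ B u x = true ∧ ω.2.2 u x = true := by
  simp [sirProc, sirStep]

lemma proc_succ_snd (B : W → W → Bool) (ω : Coins W) (t : ℕ) :
    (sirProc B ω (t + 1)).2 = (sirProc B ω t).2 ∪ (sirProc B ω t).1 := rfl

lemma proc_disj (B : W → W → Bool) (ω : Coins W) :
    ∀ t, ∀ x ∈ (sirProc B ω t).1, x ∉ (sirProc B ω t).2 := by
  intro t x hx
  cases t with
  | zero => simp [sirProc]
  | succ t =>
    rw [mem_proc_succ_fst] at hx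
    rw [proc_succ_snd, Finset.mem_union]
    tauto

lemma proc_stable (B : W → W → Bool) (ω : Coins W) (m : ℕ)
    (h : (sirProc B ω m).1 = ∅) : ∀ k, sirProc B ω (m + k) = sirProc B ω m := by
  intro k
  induction k with
  | zero => rfl
  | succ k ih =>
    have : sirProc B ω (m + (k + 1)) = sirStep B ω (sirProc B ω (m + k)) := rfl
    rw [this, ih]
    unfold sirStep
    rw [h]
    ext x
    · simp [h]
    · simp [h]

lemma proc_exists_empty (B : W → W → Bool) (ω : Coins W) :
    ∃ t ≤ Fintype.card W, (sirProc B ω t).1 = ∅ := by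
  by_contra hc
  push_neg at hc
  have grow : ∀ t ≤ Fintype.card W + 1, t ≤ (sirProc B ω t).2.card := by
    intro t
    induction t with
    | zero => intro _; exact Nat.zero_le _
    | succ t ih =>
      intro ht
      have ht' : t ≤ Fintype.card W := by omega
      obtain ⟨x, hx⟩ := hc t ht'
      have hxR : x ∉ (sirProc B ω t).2 := proc_disj B ω t x hx
      rw [proc_succ_snd]
      calc t + 1 ≤ (sirProc B ω t).2.card + 1 := by
            have := ih (by omega); omega
        _ = (insert x (sirProc B ω t).2).card := (Finset.card_insert_of_notMem hxR).symm
        _ ≤ ((sirProc B ω t).2 ∪ (sirProc B ω t).1).card := by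
            apply Finset.card_le_card
            intro y hy
            rw [Finset.mem_insert] at hy
            rcases hy with rfl | hy
            · exact Finset.mem_union_right _ hx
            · exact Finset.mem_union_left _ hy
  have := grow (Fintype.card W + 1) le_rfl
  have hle : (sirProc B ω (Fintype.card W + 1)).2.card ≤ Fintype.card W :=
    Finset.card_le_univ _
  omega

lemma proc_eq_of_ge (B : W → W → Bool) (ω : Coins W) {m m' : ℕ}
    (hm : Fintype.card W ≤ m) (hm' : Fintype.card W ≤ m') :
    sirProc B ω m = sirProc B ω m' := by
  obtain ⟨t0, ht0, hE⟩ := proc_exists_empty B ω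
  have h1 : sirProc B ω m = sirProc B ω t0 := by
    have := proc_stable B ω t0 hE (m - t0)
    rwa [Nat.add_sub_cancel' (le_trans ht0 hm)] at this
  have h2 : sirProc B ω m' = sirProc B ω t0 := by
    have := proc_stable B ω t0 hE (m' - t0)
    rwa [Nat.add_sub_cancel' (le_trans ht0 hm')] at this
  rw [h1, h2]

end Proc

lemma proc_c_congr {W : Type*} [Fintype W] [DecidableEq W] (B : W → W → Bool) (a r : W → Bool) (c c' : W → W → Bool)
    (h : ∀ u v, B u v = true → c u v = c' u v) :
    ∀ t, sirProc B (a, r, c) t = sirProc B (a, r, c') t := by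
  intro t
  induction t with
  | zero => rfl
  | succ t ih =>
    show sirStep B (a, r, c) _ = sirStep B (a, r, c') _
    rw [ih]
    unfold sirStep
    ext x
    · simp only [Finset.mem_filter, Finset.mem_univ, true_and]
      constructor <;>
        (rintro ⟨h1, h2, u, hu, hr, hB, hc⟩;
         exact ⟨h1, h2, u, hu, hr, hB, by rw [← hc, h u x hB]⟩)
    · rfl

lemma coupling (A : V → V → Bool) (ω : Coins V) : ∀ t : ℕ,
    (∀ v : V, Sum.inl v ∈ (sirProc (helperAdj A) (liftCoins A ω) (2 * t)).1 ↔
      v ∈ (sirProc A ω t).1) ∧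
    (∀ e : EdgeOf A, Sum.inr e ∉ (sirProc (helperAdj A) (liftCoins A ω) (2 * t)).1) ∧
    (∀ v : V, Sum.inl v ∈ (sirProc (helperAdj A) (liftCoins A ω) (2 * t)).2 ↔
      v ∈ (sirProc A ω t).2) ∧
    (∀ e : EdgeOf A, Sum.inr e ∈ (sirProc (helperAdj A) (liftCoins A ω) (2 * t)).2 ↔
      e.1.1 ∈ (sirProc A ω t).2 ∧ ω.2.1 e.1.1 = false) := by
  intro t
  induction t with
  | zero =>
    refine ⟨fun v => ?_, fun e => ?_, fun v => ?_, fun e => ?_⟩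
    · simp only [sirProc, Finset.mem_filter, Finset.mem_univ, true_and]; rfl
    · simp only [sirProc, Finset.mem_filter, Finset.mem_univ, true_and]; simp [liftCoins]
    · simp [sirProc]
    · simp [sirProc]
  | succ t ih =>
    obtain ⟨ih1, ih2, ih3, ih4⟩ := ih
    have odd1 : ∀ e : EdgeOf A,
        Sum.inr e ∈ (sirProc (helperAdj A) (liftCoins A ω) (2 * t + 1)).1 ↔
        e.1.1 ∈ (sirProc A ω t).1 ∧ ω.2.1 e.1.1 = false := by
      intro e
      rw [mem_proc_succ_fst]
      constructor
      · rintro ⟨-, -, u, hu, hrem, hadj, -⟩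
        cases u with
        | inl v =>
          have hv : e.1.1 = v := by simpa [helperAdj] using hadj
          subst hv
          exact ⟨(ih1 _).1 hu, by simpa [liftCoins] using hrem⟩
        | inr e' => exact absurd hu (ih2 e')
      · rintro ⟨h1, h2⟩
        refine ⟨ih2 e, ?_, Sum.inl e.1.1, (ih1 _).2 h1,
          by simpa [liftCoins] using h2, by simp [helperAdj], rfl⟩
        rw [ih4]
        rintro ⟨hR, -⟩
        exact proc_disj A ω t _ h1 hR
    have odd2 : ∀ v : V,
        Sum.inl v ∉ (sirProc (helperAdj A) (liftCoins A ω) (2 * t + 1)).1 := by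
      intro v hv
      rw [mem_proc_succ_fst] at hv
      obtain ⟨-, -, u, hu, -, hadj, -⟩ := hv
      cases u with
      | inl v' => simp [helperAdj] at hadj
      | inr e' => exact ih2 e' hu
    have odd3 : ∀ v : V,
        Sum.inl v ∈ (sirProc (helperAdj A) (liftCoins A ω) (2 * t + 1)).2 ↔
        v ∈ (sirProc A ω t).2 ∨ v ∈ (sirProc A ω t).1 := by
      intro v
      rw [proc_succ_snd, Finset.mem_union]
      exact or_congr (ih3 v) (ih1 v)
    have odd4 : ∀ e : EdgeOf A,
        Sum.inr e ∈ (sirProc (helperAdj A) (liftCoins A ω) (2 * t + 1)).2 ↔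
        e.1.1 ∈ (sirProc A ω t).2 ∧ ω.2.1 e.1.1 = false := by
      intro e
      rw [proc_succ_snd, Finset.mem_union]
      constructor
      · rintro (h | h)
        · exact (ih4 e).1 h
        · exact absurd h (ih2 e)
      · intro h; exact Or.inl ((ih4 e).2 h)
    have h21 : 2 * (t + 1) = 2 * t + 1 + 1 := by ring
    rw [h21]
    refine ⟨fun v => ?_, fun e hmem => ?_, fun v => ?_, fun e => ?_⟩
    · rw [mem_proc_succ_fst (helperAdj A) (liftCoins A ω) (2 * t + 1) (Sum.inl v),
        mem_proc_succ_fst A ω t v]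
      constructor
      · rintro ⟨-, hnotR, u, hu, hrem, hadj, -⟩
        cases u with
        | inl v' => exact absurd hu (odd2 v')
        | inr e =>
          have he : e.1.2 = v := by simpa [helperAdj] using hadj
          obtain ⟨hI, hcf⟩ := (odd1 e).1 hu
          have htr : ω.2.2 e.1.1 e.1.2 = true := by simpa [liftCoins] using hrem
          rw [odd3] at hnotR
          push_neg at hnotR
          exact ⟨hnotR.2, hnotR.1, e.1.1, hI, hcf, he ▸ e.2, he ▸ htr⟩
      · rintro ⟨hnI, hnR, u, hu, hcf, hA, hc⟩
        refine ⟨odd2 v, ?_, Sum.inr ⟨(u, v), hA⟩, (odd1 _).2 ⟨hu, hcf⟩,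
          by simp [liftCoins, hc], by simp [helperAdj], rfl⟩
        rw [odd3]
        rintro (h | h)
        · exact hnR h
        · exact hnI h
    · rw [mem_proc_succ_fst] at hmem
      obtain ⟨-, -, u, hu, -, hadj, -⟩ := hmem
      cases u with
      | inl v' => exact odd2 v' hu
      | inr e' => simp [helperAdj] at hadj
    · rw [proc_succ_snd (helperAdj A) (liftCoins A ω) (2 * t + 1), Finset.mem_union, odd3 v,
        proc_succ_snd A ω t, Finset.mem_union]
      have := odd2 v
      tauto
    · rw [proc_succ_snd (helperAdj A) (liftCoins A ω) (2 * t + 1), Finset.mem_union, odd4 e,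
        odd1 e, proc_succ_snd A ω t, Finset.mem_union]
      tauto

section Reduce
variable {H : Type*} [Fintype H] [DecidableEq H]

lemma coins_sum_reduce_a (s0 : H) (γ' : H → ℝ) (τ' : H → H → ℝ) (N : Coins H → ℝ) :
    ∑ ω : Coins H, coinWeight (fun x => if x = s0 then 1 else 0) γ' τ' ω * N ω
      = ∑ b : H → Bool, (∏ x, if b x then γ' x else 1 - γ' x) *
          ∑ c : H → H → Bool, (∏ u, ∏ v, if c u v then τ' u v else 1 - τ' u v) *
            N (fun x => decide (x = s0), b, c) := by
  simp only [coinWeight]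
  trans ∑ a : H → Bool,
      (∏ x, if a x then (if x = s0 then (1:ℝ) else 0) else 1 - (if x = s0 then 1 else 0)) *
      ∑ b : H → Bool, (∏ x, if b x then γ' x else 1 - γ' x) *
        ∑ c : H → H → Bool, (∏ u, ∏ v, if c u v then τ' u v else 1 - τ' u v) * N (a, b, c)
  · simp only [Fintype.sum_prod_type, Finset.mul_sum]
    exact Finset.sum_congr rfl fun a _ => Finset.sum_congr rfl fun b _ =>
      Finset.sum_congr rfl fun c _ => by ring
  · exact sum_delta (fun x => decide (x = s0))
      (fun x bo => if bo then (if x = s0 then (1:ℝ) else 0) else 1 - (if x = s0 then 1 else 0))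
      (fun a => ∑ b : H → Bool, (∏ x, if b x then γ' x else 1 - γ' x) *
        ∑ c : H → H → Bool, (∏ u, ∏ v, if c u v then τ' u v else 1 - τ' u v) * N (a, b, c))
      (fun x => by by_cases h : x = s0 <;> simp [h])
      (fun x bo hbo => by
        by_cases h : x = s0 <;> simp [h] at hbo ⊢ <;> simp [hbo])

lemma coins_sum_reduce (s0 : H) (γ' : H → ℝ) (N : Coins H → ℝ) :
    ∑ ω : Coins H, coinWeight (fun x => if x = s0 then 1 else 0) γ' (fun _ _ => 1) ω * N ω
      = ∑ b : H → Bool, (∏ x, if b x then γ' x else 1 - γ' x) *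
          N (fun x => decide (x = s0), b, fun _ _ => true) := by
  rw [coins_sum_reduce_a]
  refine Finset.sum_congr rfl fun b _ => ?_
  congr 1
  exact sum_delta2 (fun _ _ => true) (fun _ _ bo => if bo then (1:ℝ) else 1 - 1)
    (fun c => N (fun x => decide (x = s0), b, c))
    (fun _ _ => by simp) (fun _ _ bo hbo => by simp at hbo; simp [hbo])

end Reduce

lemma part_a (A : V → V → Bool) (s : V) (γ : V → ℝ) (τ : V → V → ℝ) (e : EdgeOf A) :
    (∑ ω : Coins (HelperV A),
      coinWeight (fun x => if x = Sum.inl s then 1 else 0) (helperGamma A γ τ)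
        (fun _ _ => 1) ω * (if ω.2.1 (Sum.inr e) = false then 1 else 0))
      = τ e.1.1 e.1.2 := by
  rw [coins_sum_reduce (Sum.inl s) (helperGamma A γ τ)
    (fun ω => if ω.2.1 (Sum.inr e) = false then (1:ℝ) else 0)]
  trans ∑ b : HelperV A → Bool, ∏ x,
      ((if b x then helperGamma A γ τ x else 1 - helperGamma A γ τ x) *
       (if x = Sum.inr e then (if b x then 0 else 1) else 1))
  · refine Finset.sum_congr rfl fun b _ => ?_
    rw [Finset.prod_mul_distrib]
    congr 1
    rw [Finset.prod_ite_eq' Finset.univ (Sum.inr e) (fun x => if b x then (0:ℝ) else 1)]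
    simp only [Finset.mem_univ, if_true]
    rcases Bool.eq_false_or_eq_true (b (Sum.inr e)) with h | h <;> simp [h]
  · rw [sum_boolfun_prod (fun x bo =>
      (if bo then helperGamma A γ τ x else 1 - helperGamma A γ τ x) *
      (if x = Sum.inr e then (if bo then (0:ℝ) else 1) else 1))]
    rw [Finset.prod_eq_single (Sum.inr e)]
    · simp [helperGamma]
    · intro x _ hx
      simp only [if_neg hx, mul_one, if_true, if_false, Bool.false_eq_true]
      ring
    · intro h; exact absurd (Finset.mem_univ _) h

lemma lift_everInf_card (A : V → V → Bool) (ω : Coins V) :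
    (((everInf (helperAdj A) (liftCoins A ω)).filter (fun x => x.isLeft = true)).card : ℝ)
      = ((everInf A ω).card : ℝ) := by
  obtain ⟨t0, ht0, hE⟩ := proc_exists_empty A ω
  have hE' : (sirProc (helperAdj A) (liftCoins A ω) (2 * t0)).1 = ∅ := by
    rw [Finset.eq_empty_iff_forall_notMem]
    intro x hx
    cases x with
    | inl v =>
      rw [(coupling A ω t0).1 v, hE] at hx
      exact absurd hx (Finset.notMem_empty v)
    | inr e => exact (coupling A ω t0).2.1 e hx
  have horig : everInf A ω = (sirProc A ω t0).1 ∪ (sirProc A ω t0).2 := by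
    unfold everInf
    rw [show Fintype.card V = t0 + (Fintype.card V - t0) from (Nat.add_sub_cancel' ht0).symm,
      proc_stable A ω t0 hE]
  have hred : everInf (helperAdj A) (liftCoins A ω)
      = (sirProc (helperAdj A) (liftCoins A ω) (2 * t0)).1 ∪
        (sirProc (helperAdj A) (liftCoins A ω) (2 * t0)).2 := by
    unfold everInf
    have h1 : sirProc (helperAdj A) (liftCoins A ω) (Fintype.card (HelperV A))
        = sirProc (helperAdj A) (liftCoins A ω) (Fintype.card (HelperV A) + 2 * t0) :=
      proc_eq_of_ge _ _ le_rfl (Nat.le_add_right _ _)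
    have h2 := proc_stable (helperAdj A) (liftCoins A ω) (2 * t0) hE' (Fintype.card (HelperV A))
    rw [h1, show Fintype.card (HelperV A) + 2 * t0 = 2 * t0 + Fintype.card (HelperV A) from
      Nat.add_comm _ _, h2]
  rw [horig, hred]
  have key : (((sirProc (helperAdj A) (liftCoins A ω) (2 * t0)).1 ∪
        (sirProc (helperAdj A) (liftCoins A ω) (2 * t0)).2).filter (fun x => x.isLeft = true))
      = ((sirProc A ω t0).1 ∪ (sirProc A ω t0).2).image Sum.inl := by
    ext x
    cases x with
    | inl v =>
      rw [Finset.mem_filter, Finset.mem_union]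
      constructor
      · rintro ⟨h | h, -⟩
        · exact Finset.mem_image_of_mem _ (Finset.mem_union_left _ (((coupling A ω t0).1 v).1 h))
        · exact Finset.mem_image_of_mem _
            (Finset.mem_union_right _ (((coupling A ω t0).2.2.1 v).1 h))
      · intro hx
        obtain ⟨u, hu, hux⟩ := Finset.mem_image.1 hx
        obtain rfl : u = v := Sum.inl_injective hux
        rw [Finset.mem_union] at hu
        refine ⟨?_, rfl⟩
        rcases hu with h | h
        · exact Or.inl (((coupling A ω t0).1 _).2 h)
        · exact Or.inr (((coupling A ω t0).2.2.1 _).2 h)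
    | inr e =>
      rw [Finset.mem_filter]
      simp
  rw [key, Finset.card_image_of_injective _ Sum.inl_injective]

def extC (A : V → V → Bool) (d : EdgeOf A → Bool) : V → V → Bool :=
  fun u v => if h : A u v = true then d ⟨(u, v), h⟩ else true

lemma lift_extC (A : V → V → Bool) (a r : V → Bool) (d : EdgeOf A → Bool) :
    ((Sum.elim a (fun _ => false) : HelperV A → Bool), (Sum.elim r d : HelperV A → Bool),
        (fun _ _ => true : HelperV A → HelperV A → Bool))
      = liftCoins A (a, r, extC A (fun e => ! d e)) := by
  unfold liftCoins extC
  refine Prod.ext ?_ (Prod.ext ?_ rfl)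
  · funext x; cases x <;> rfl
  · funext x
    cases x with
    | inl v => rfl
    | inr e =>
      show d e = !(if h : A e.1.1 e.1.2 = true then !d ⟨(e.1.1, e.1.2), h⟩ else true)
      rw [dif_pos e.2]
      simp

lemma part_c (A : V → V → Bool) (s : V) (γ : V → ℝ) (τ : V → V → ℝ) :
    (∑ ω : Coins (HelperV A),
        coinWeight (fun x => if x = Sum.inl s then 1 else 0) (helperGamma A γ τ)
          (fun _ _ => 1) ω *
        (((everInf (helperAdj A) ω).filter (fun x => x.isLeft = true)).card : ℝ))
      = meanExtent A (fun v => if v = s then 1 else 0) γ τ := by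
  rw [coins_sum_reduce (Sum.inl s) (helperGamma A γ τ)
    (fun ω => (((everInf (helperAdj A) ω).filter (fun x => x.isLeft = true)).card : ℝ))]
  rw [meanExtent, coins_sum_reduce_a s γ τ (fun ω => ((everInf A ω).card : ℝ))]
  have ha0 : (fun x : HelperV A => decide (x = Sum.inl s))
      = (Sum.elim (fun v => decide (v = s)) (fun _ => false) : HelperV A → Bool) := by
    funext x
    cases x with
    | inl v => simp
    | inr e => simp
  have hg : ∀ r : V → Bool, ∀ g g' : V × V → Bool,
      (∀ a : V × V, A a.1 a.2 = true → g a = g' a) →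
      (((everInf A ((fun v => decide (v = s)), r, fun u v => g (u, v))).card : ℕ) : ℝ)
        = (((everInf A ((fun v => decide (v = s)), r, fun u v => g' (u, v))).card : ℕ) : ℝ) := by
    intro r g g' hgg
    unfold everInf
    rw [proc_c_congr A (fun v => decide (v = s)) r (fun u v => g (u, v)) (fun u v => g' (u, v))
      (fun u v h => hgg (u, v) h)]
  have inner : ∀ r : V → Bool,
      ∑ c : V → V → Bool, (∏ u, ∏ v, if c u v then τ u v else 1 - τ u v) *
        ((everInf A ((fun v => decide (v = s)), r, c)).card : ℝ)
      = ∑ d : EdgeOf A → Bool,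
          (∏ e : EdgeOf A, if d e then τ e.1.1 e.1.2 else 1 - τ e.1.1 e.1.2) *
          ((everInf A ((fun v => decide (v = s)), r, extC A d)).card : ℝ) := by
    intro r
    rw [sum_curry (fun c => (∏ u, ∏ v, if c u v then τ u v else 1 - τ u v) *
      ((everInf A ((fun v => decide (v = s)), r, c)).card : ℝ))]
    trans ∑ g : V × V → Bool,
        (∏ x : V × V, if g x then τ x.1 x.2 else 1 - τ x.1 x.2) *
        ((everInf A ((fun v => decide (v = s)), r, fun u v => g (u, v))).card : ℝ)
    · exact Finset.sum_congr rfl fun g _ => by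
        rw [Fintype.prod_prod_type (fun x : V × V => if g x then τ x.1 x.2 else 1 - τ x.1 x.2)]
    · rw [sum_split (fun x : V × V => A x.1 x.2 = true)
        (fun x bo => if bo then τ x.1 x.2 else 1 - τ x.1 x.2)
        (fun x _ => by simp)
        (fun g => ((everInf A ((fun v => decide (v = s)), r, fun u v => g (u, v))).card : ℝ))
        (fun g g' h => hg r g g' h)]
      rfl
  rw [ha0]
  rw [← Equiv.sum_comp (Equiv.sumArrowEquivProdArrow V (EdgeOf A) Bool).symm
    (fun b : HelperV A → Bool =>
      (∏ x, if b x then helperGamma A γ τ x else 1 - helperGamma A γ τ x) *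
      (((everInf (helperAdj A)
          (Sum.elim (fun v => decide (v = s)) (fun _ => false), b, fun _ _ => true)).filter
          (fun x => x.isLeft = true)).card : ℝ))]
  rw [Fintype.sum_prod_type]
  refine Finset.sum_congr rfl fun r _ => ?_
  rw [inner r, Finset.mul_sum]
  rw [← Equiv.sum_comp
    (⟨fun d e => !(d e), fun d e => !(d e), fun d => by funext e; simp,
      fun d => by funext e; simp⟩ : (EdgeOf A → Bool) ≃ (EdgeOf A → Bool))
    (fun d : EdgeOf A → Bool =>
    (∏ v', if r v' then γ v' else 1 - γ v') *
      ((∏ e : EdgeOf A, if d e then τ e.1.1 e.1.2 else 1 - τ e.1.1 e.1.2) *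
       ((everInf A ((fun v => decide (v = s)), r, extC A d)).card : ℝ)))]
  refine Finset.sum_congr rfl fun d _ => ?_
  show (∏ x : HelperV A,
      if Sum.elim r d x then helperGamma A γ τ x else 1 - helperGamma A γ τ x) *
      (((everInf (helperAdj A)
        (Sum.elim (fun v => decide (v = s)) (fun _ => false), Sum.elim r d,
          fun _ _ => true)).filter (fun x => x.isLeft = true)).card : ℝ)
    = (∏ v', if r v' then γ v' else 1 - γ v') *
      ((∏ e : EdgeOf A, if !d e then τ e.1.1 e.1.2 else 1 - τ e.1.1 e.1.2) *
       ((everInf A ((fun v => decide (v = s)), r, extC A (fun e => !d e))).card : ℝ))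
  rw [lift_extC A (fun v => decide (v = s)) r d, lift_everInf_card]
  rw [Fintype.prod_sum_type (fun x : HelperV A =>
    if Sum.elim r d x then helperGamma A γ τ x else 1 - helperGamma A γ τ x)]
  have hτpart : (∏ e : EdgeOf A,
      if Sum.elim r d (Sum.inr e) then helperGamma A γ τ (Sum.inr e)
      else 1 - helperGamma A γ τ (Sum.inr e))
      = ∏ e : EdgeOf A, if !d e then τ e.1.1 e.1.2 else 1 - τ e.1.1 e.1.2 := by
    refine Finset.prod_congr rfl fun e _ => ?_
    show (if d e then 1 - τ e.1.1 e.1.2 else 1 - (1 - τ e.1.1 e.1.2)) = _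
    rcases Bool.eq_false_or_eq_true (d e) with h | h <;> rw [h] <;> simp <;> ring
  rw [hτpart]
  have hγpart : (∏ x : V, if Sum.elim r d (Sum.inl x) then helperGamma A γ τ (Sum.inl x)
      else 1 - helperGamma A γ τ (Sum.inl x)) = ∏ v', if r v' then γ v' else 1 - γ v' := rfl
  rw [hγpart]
  ring
/-- **reduction of transmission to removal.** For the SIR epidemic on
`G(V,A)` with source `s`, transmission `τ` and removal `γ`, and the reduced epidemic
on the helper graph (all transmissions `1`, helper `h_e` removed with probability
`1 - τ(e)`): (a) the probability that the helper of edge `(v,w)` is not removed —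
i.e. that an infected `v` transmits to `w` — equals `τ(v,w)`; (b) under the natural
coupling, `v ∈ V` is infected at time `t` in the original epidemic iff it is
infected at time `2t` in the reduced one; (c) the expected number of ultimately
infected original (non-helper) nodes in the reduced epidemic equals the mean final
extent `E(|R_n|)` of the original epidemic. -/
theorem sir_helper_reduction
    (A : V → V → Bool) (s : V) (γ : V → ℝ) (τ : V → V → ℝ)
    (hγ : ∀ v, 0 ≤ γ v ∧ γ v ≤ 1) (hτ : ∀ u v, 0 ≤ τ u v ∧ τ u v ≤ 1) :
    (∀ e : EdgeOf A,
      (∑ ω : Coins (HelperV A),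
        coinWeight (fun x => if x = Sum.inl s then 1 else 0) (helperGamma A γ τ)
          (fun _ _ => 1) ω * (if ω.2.1 (Sum.inr e) = false then 1 else 0))
        = τ e.1.1 e.1.2) ∧
    (∀ ω : Coins V, ω.1 = (fun v => decide (v = s)) → ∀ (t : ℕ) (v : V),
      v ∈ (sirProc A ω t).1 ↔
        Sum.inl v ∈ (sirProc (helperAdj A) (liftCoins A ω) (2 * t)).1) ∧
    (∑ ω : Coins (HelperV A),
        coinWeight (fun x => if x = Sum.inl s then 1 else 0) (helperGamma A γ τ)
          (fun _ _ => 1) ω *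
        (((everInf (helperAdj A) ω).filter (fun x => x.isLeft = true)).card : ℝ))
      = meanExtent A (fun v => if v = s then 1 else 0) γ τ := by
  exact ⟨fun e => part_a A s γ τ e, fun ω _ t v => ((coupling A ω t).1 v).symm, part_c A s γ τ⟩
end Curry
end

section
/- (Main theorem: monotonicity of SIR mean final extent.) Let G(V,A) be a finite directed graph. Let τ₊(e) ≥ τ(e) for all edges e, γ₋(v) ≤ γ(v) for all nodes v, and σ₊(v) ≥ σ(v) for all nodes v. Consider the discrete-time SIR epidemic Ē with parameters (σ₊, γ₋, τ₊) and the epidemic E with parameters (σ, γ, τ). Then the mean final extent satisfies E_{σ₊,γ₋,τ₊}(|R_n|) ≥ E_{σ,γ,τ}(|R_n|). -/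
open Finset

variable {V : Type*} [Fintype V] [DecidableEq V]

/-! ### Auxiliary development: deterministic monotonicity of the ever-infected set -/

/-- The one-step closure operator: add all good-out-neighbours. -/
def sirF (A : V → V → Bool) (ω : Coins V) (S : Finset V) : Finset V :=
  S ∪ univ.filter (fun v => ∃ u ∈ S, ω.2.1 u = false ∧ A u v = true ∧ ω.2.2 u v = true)

lemma sirProc_key (A : V → V → Bool) (ω : Coins V) (t : ℕ) :
    ((sirProc A ω t).1 ∪ (sirProc A ω t).2)
      = (sirF A ω)^[t] (univ.filter (fun v => ω.1 v = true)) ∧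
    ∀ u ∈ (sirProc A ω t).2, ∀ v, ω.2.1 u = false → A u v = true → ω.2.2 u v = true →
      v ∈ (sirProc A ω t).1 ∪ (sirProc A ω t).2 := by
  induction t with
  | zero => simp [sirProc]
  | succ t ih =>
    obtain ⟨h1, h2⟩ := ih
    constructor
    · rw [Function.iterate_succ_apply', ← h1]
      ext v
      simp only [sirProc, sirStep, sirF, mem_union, mem_filter, mem_univ, true_and]
      constructor
      · rintro (⟨hv1, hv2, u, hu, h⟩ | hv | hv)
        · exact Or.inr ⟨u, Or.inl hu, h⟩
        · exact Or.inl (Or.inr hv)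
        · exact Or.inl (Or.inl hv)
      · rintro ((hv | hv) | ⟨u, (hu | hu), hg⟩)
        · exact Or.inr (Or.inr hv)
        · exact Or.inr (Or.inl hv)
        · by_cases hvI : v ∈ (sirProc A ω t).1
          · exact Or.inr (Or.inr hvI)
          by_cases hvR : v ∈ (sirProc A ω t).2
          · exact Or.inr (Or.inl hvR)
          exact Or.inl ⟨hvI, hvR, u, hu, hg⟩
        · rcases mem_union.mp (h2 u hu v hg.1 hg.2.1 hg.2.2) with hv | hv
          · exact Or.inr (Or.inr hv)
          · exact Or.inr (Or.inl hv)
    · intro u hu v hr he ht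
      simp only [sirProc, sirStep, mem_union, mem_filter, mem_univ, true_and] at hu ⊢
      rcases hu with hu | hu
      · rcases mem_union.mp (h2 u hu v hr he ht) with hv | hv
        · exact Or.inr (Or.inr hv)
        · exact Or.inr (Or.inl hv)
      · by_cases hvI : v ∈ (sirProc A ω t).1
        · exact Or.inr (Or.inr hvI)
        by_cases hvR : v ∈ (sirProc A ω t).2
        · exact Or.inr (Or.inl hvR)
        exact Or.inl ⟨hvI, hvR, u, hu, hr, he, ht⟩

lemma everInf_eq (A : V → V → Bool) (ω : Coins V) :
    everInf A ω = (sirF A ω)^[Fintype.card V] (univ.filter (fun v => ω.1 v = true)) :=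
  (sirProc_key A ω (Fintype.card V)).1

lemma everInf_mono (A : V → V → Bool) {ω ω' : Coins V}
    (h1 : ∀ v, ω.1 v = true → ω'.1 v = true)
    (h2 : ∀ v, ω'.2.1 v = true → ω.2.1 v = true)
    (h3 : ∀ u v, ω.2.2 u v = true → ω'.2.2 u v = true) :
    everInf A ω ⊆ everInf A ω' := by
  rw [everInf_eq, everInf_eq]
  have hF : ∀ S S' : Finset V, S ⊆ S' → sirF A ω S ⊆ sirF A ω' S' := by
    intro S S' hS v hv
    simp only [sirF, mem_union, mem_filter, mem_univ, true_and] at hv ⊢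
    rcases hv with hv | ⟨u, hu, hr, he, ht⟩
    · exact Or.inl (hS hv)
    · refine Or.inr ⟨u, hS hu, ?_, he, h3 u v ht⟩
      cases hru : ω'.2.1 u with
      | false => rfl
      | true => rw [h2 u hru] at hr; exact hr
  have hinit : (univ.filter (fun v => ω.1 v = true)) ⊆ (univ.filter (fun v => ω'.1 v = true)) := by
    intro v hv
    simp only [mem_filter, mem_univ, true_and] at hv ⊢
    exact h1 v hv
  induction (Fintype.card V) with
  | zero => exact hinit
  | succ n ihn =>
    rw [Function.iterate_succ_apply', Function.iterate_succ_apply']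
    exact hF _ _ ihn

/-! ### Auxiliary development: the monotone coupling of coin weights -/

/-- Monotone coupling weight of two Bernoulli coins with parameters `p ≤ q`:
first marginal is `Bernoulli p`, second is `Bernoulli q`, supported on `b → b'`. -/
def cw (p q : ℝ) : Bool → Bool → ℝ
  | false, false => 1 - q
  | false, true  => q - p
  | true,  false => 0
  | true,  true  => p

lemma cw_nonneg {p q : ℝ} (h0 : 0 ≤ p) (hpq : p ≤ q) (h1 : q ≤ 1) :
    ∀ b b', 0 ≤ cw p q b b' := by
  rintro (_|_) (_|_) <;> simp [cw] <;> linarith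

lemma cw_fst (p q : ℝ) (b : Bool) :
    cw p q b false + cw p q b true = if b then p else 1 - p := by
  cases b <;> simp [cw]

lemma cw_snd (p q : ℝ) (b' : Bool) :
    cw p q false b' + cw p q true b' = if b' then q else 1 - q := by
  cases b' <;> simp [cw]

lemma cw_support {p q : ℝ} {b b' : Bool} (h : cw p q b b' ≠ 0) : b = true → b' = true := by
  cases b <;> cases b' <;> simp [cw] at h ⊢

lemma sum_pi_prod {ι α : Type*} [Fintype ι] [DecidableEq ι] [Fintype α] [DecidableEq α]
    (g : ι → α → ℝ) : ∑ f : ι → α, ∏ i, g i (f i) = ∏ i, ∑ a, g i a := by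
  rw [Finset.prod_univ_sum, Fintype.piFinset_univ]

lemma sum_pi_bool {ι : Type*} [Fintype ι] [DecidableEq ι]
    (g : ι → Bool → ℝ) : ∑ f : ι → Bool, ∏ i, g i (f i) = ∏ i, (g i false + g i true) := by
  rw [sum_pi_prod]
  congr 1; ext i
  simp [Fintype.sum_bool, add_comm]

lemma sum_pair_prod {α β : Type*} [Fintype α] [Fintype β] (f : α → ℝ) (g : β → ℝ) :
    ∑ x : α × β, f x.1 * g x.2 = (∑ a, f a) * (∑ b, g b) := by
  rw [Fintype.sum_prod_type, Finset.sum_mul_sum]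

lemma sum_triple_prod {α β γ' : Type*} [Fintype α] [Fintype β] [Fintype γ']
    (f : α → ℝ) (g : β → ℝ) (h : γ' → ℝ) :
    ∑ x : α × β × γ', f x.1 * g x.2.1 * h x.2.2
      = (∑ a, f a) * (∑ b, g b) * (∑ c, h c) := by
  calc ∑ x : α × β × γ', f x.1 * g x.2.1 * h x.2.2
      = ∑ x : α × β × γ', f x.1 * ((fun y : β × γ' => g y.1 * h y.2) x.2) := by
        simp [mul_assoc]
    _ = (∑ a, f a) * (∑ y : β × γ', g y.1 * h y.2) := by
        exact sum_pair_prod f (fun y : β × γ' => g y.1 * h y.2)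
    _ = (∑ a, f a) * ((∑ b, g b) * (∑ c, h c)) := by rw [sum_pair_prod]
    _ = _ := by ring

/-- The coupling weight on pairs of coin outcomes. -/
def cplW (σ σp γm γ : V → ℝ) (τ τp : V → V → ℝ) (ω ω' : Coins V) : ℝ :=
  (∏ v, cw (σ v) (σp v) (ω.1 v) (ω'.1 v)) *
  (∏ v, cw (γm v) (γ v) (ω'.2.1 v) (ω.2.1 v)) *
  ∏ u, ∏ v, cw (τ u v) (τp u v) (ω.2.2 u v) (ω'.2.2 u v)

lemma cplW_sum_right (σ σp γm γ : V → ℝ) (τ τp : V → V → ℝ) (ω : Coins V) :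
    ∑ ω' : Coins V, cplW σ σp γm γ τ τp ω ω' = coinWeight σ γ τ ω := by
  have e0 := sum_triple_prod
    (fun a : V → Bool => ∏ v, cw (σ v) (σp v) (ω.1 v) (a v))
    (fun b : V → Bool => ∏ v, cw (γm v) (γ v) (b v) (ω.2.1 v))
    (fun c : V → V → Bool => ∏ u, ∏ v, cw (τ u v) (τp u v) (ω.2.2 u v) (c u v))
  have e1 : (∑ a : V → Bool, ∏ v, cw (σ v) (σp v) (ω.1 v) (a v))
      = ∏ v, (cw (σ v) (σp v) (ω.1 v) false + cw (σ v) (σp v) (ω.1 v) true) := by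
    exact sum_pi_bool (fun v b => cw (σ v) (σp v) (ω.1 v) b)
  have e2 : (∑ b : V → Bool, ∏ v, cw (γm v) (γ v) (b v) (ω.2.1 v))
      = ∏ v, (cw (γm v) (γ v) false (ω.2.1 v) + cw (γm v) (γ v) true (ω.2.1 v)) := by
    exact sum_pi_bool (fun v b => cw (γm v) (γ v) b (ω.2.1 v))
  have e3 : (∑ c : V → V → Bool, ∏ u, ∏ v, cw (τ u v) (τp u v) (ω.2.2 u v) (c u v))
      = ∏ u, ∑ a : V → Bool, ∏ v, cw (τ u v) (τp u v) (ω.2.2 u v) (a v) := by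
    exact sum_pi_prod (fun u (a : V → Bool) => ∏ v, cw (τ u v) (τp u v) (ω.2.2 u v) (a v))
  have e4 : ∀ u, (∑ a : V → Bool, ∏ v, cw (τ u v) (τp u v) (ω.2.2 u v) (a v))
      = ∏ v, (cw (τ u v) (τp u v) (ω.2.2 u v) false + cw (τ u v) (τp u v) (ω.2.2 u v) true) := by
    intro u
    exact sum_pi_bool (fun v b => cw (τ u v) (τp u v) (ω.2.2 u v) b)
  rw [show (∑ ω' : Coins V, cplW σ σp γm γ τ τp ω ω')
      = ∑ x : (V → Bool) × (V → Bool) × (V → V → Bool),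
          (∏ v, cw (σ v) (σp v) (ω.1 v) (x.1 v)) *
          (∏ v, cw (γm v) (γ v) (x.2.1 v) (ω.2.1 v)) *
          ∏ u, ∏ v, cw (τ u v) (τp u v) (ω.2.2 u v) (x.2.2 u v) from rfl, e0, e1, e2, e3]
  unfold coinWeight
  congr 1
  · congr 1
    · exact Finset.prod_congr rfl fun v _ => cw_fst _ _ _
    · exact Finset.prod_congr rfl fun v _ => cw_snd _ _ _
  · refine Finset.prod_congr rfl fun u _ => ?_
    rw [e4 u]
    exact Finset.prod_congr rfl fun v _ => cw_fst _ _ _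

lemma cplW_sum_left (σ σp γm γ : V → ℝ) (τ τp : V → V → ℝ) (ω' : Coins V) :
    ∑ ω : Coins V, cplW σ σp γm γ τ τp ω ω' = coinWeight σp γm τp ω' := by
  have e0 := sum_triple_prod
    (fun a : V → Bool => ∏ v, cw (σ v) (σp v) (a v) (ω'.1 v))
    (fun b : V → Bool => ∏ v, cw (γm v) (γ v) (ω'.2.1 v) (b v))
    (fun c : V → V → Bool => ∏ u, ∏ v, cw (τ u v) (τp u v) (c u v) (ω'.2.2 u v))
  have e1 : (∑ a : V → Bool, ∏ v, cw (σ v) (σp v) (a v) (ω'.1 v))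
      = ∏ v, (cw (σ v) (σp v) false (ω'.1 v) + cw (σ v) (σp v) true (ω'.1 v)) := by
    exact sum_pi_bool (fun v b => cw (σ v) (σp v) b (ω'.1 v))
  have e2 : (∑ b : V → Bool, ∏ v, cw (γm v) (γ v) (ω'.2.1 v) (b v))
      = ∏ v, (cw (γm v) (γ v) (ω'.2.1 v) false + cw (γm v) (γ v) (ω'.2.1 v) true) := by
    exact sum_pi_bool (fun v b => cw (γm v) (γ v) (ω'.2.1 v) b)
  have e3 : (∑ c : V → V → Bool, ∏ u, ∏ v, cw (τ u v) (τp u v) (c u v) (ω'.2.2 u v))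
      = ∏ u, ∑ a : V → Bool, ∏ v, cw (τ u v) (τp u v) (a v) (ω'.2.2 u v) := by
    exact sum_pi_prod (fun u (a : V → Bool) => ∏ v, cw (τ u v) (τp u v) (a v) (ω'.2.2 u v))
  have e4 : ∀ u, (∑ a : V → Bool, ∏ v, cw (τ u v) (τp u v) (a v) (ω'.2.2 u v))
      = ∏ v, (cw (τ u v) (τp u v) false (ω'.2.2 u v) + cw (τ u v) (τp u v) true (ω'.2.2 u v)) := by
    intro u
    exact sum_pi_bool (fun v b => cw (τ u v) (τp u v) b (ω'.2.2 u v))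
  rw [show (∑ ω : Coins V, cplW σ σp γm γ τ τp ω ω')
      = ∑ x : (V → Bool) × (V → Bool) × (V → V → Bool),
          (∏ v, cw (σ v) (σp v) (x.1 v) (ω'.1 v)) *
          (∏ v, cw (γm v) (γ v) (ω'.2.1 v) (x.2.1 v)) *
          ∏ u, ∏ v, cw (τ u v) (τp u v) (x.2.2 u v) (ω'.2.2 u v) from rfl, e0, e1, e2, e3]
  unfold coinWeight
  congr 1
  · congr 1
    · exact Finset.prod_congr rfl fun v _ => cw_snd _ _ _
    · exact Finset.prod_congr rfl fun v _ => cw_fst _ _ _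
  · refine Finset.prod_congr rfl fun u _ => ?_
    rw [e4 u]
    exact Finset.prod_congr rfl fun v _ => cw_snd _ _ _

/-- **main theorem: monotonicity of SIR mean final extent.** For any
directed graph, if `σ₊ ≥ σ`, `γ₋ ≤ γ` and `τ₊ ≥ τ` pointwise (all being
probabilities), then the mean final extent of the epidemic `(σ₊, γ₋, τ₊)` is at
least that of the epidemic `(σ, γ, τ)`. -/
theorem sir_mean_extent_monotone {V : Type*} [Fintype V] [DecidableEq V]
    (A : V → V → Bool) (σ σp γm γ : V → ℝ) (τ τp : V → V → ℝ)
    (hσ : ∀ v, 0 ≤ σ v ∧ σ v ≤ σp v ∧ σp v ≤ 1)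
    (hγ : ∀ v, 0 ≤ γm v ∧ γm v ≤ γ v ∧ γ v ≤ 1)
    (hτ : ∀ u v, 0 ≤ τ u v ∧ τ u v ≤ τp u v ∧ τp u v ≤ 1) :
    meanExtent A σp γm τp ≥ meanExtent A σ γ τ := by
  have hW0 : ∀ ω ω' : Coins V, 0 ≤ cplW σ σp γm γ τ τp ω ω' := by
    intro ω ω'
    unfold cplW
    refine mul_nonneg (mul_nonneg ?_ ?_) ?_
    · exact Finset.prod_nonneg fun v _ =>
        cw_nonneg (hσ v).1 (hσ v).2.1 (hσ v).2.2 _ _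
    · exact Finset.prod_nonneg fun v _ =>
        cw_nonneg (hγ v).1 (hγ v).2.1 (hγ v).2.2 _ _
    · exact Finset.prod_nonneg fun u _ => Finset.prod_nonneg fun v _ =>
        cw_nonneg (hτ u v).1 (hτ u v).2.1 (hτ u v).2.2 _ _
  have hsupp : ∀ ω ω' : Coins V, cplW σ σp γm γ τ τp ω ω' ≠ 0 →
      everInf A ω ⊆ everInf A ω' := by
    intro ω ω' h
    unfold cplW at h
    have h3 := right_ne_zero_of_mul h
    have h12 := left_ne_zero_of_mul h
    have h1 := left_ne_zero_of_mul h12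
    have h2 := right_ne_zero_of_mul h12
    rw [Finset.prod_ne_zero_iff] at h1 h2 h3
    refine everInf_mono A ?_ ?_ ?_
    · exact fun v => cw_support (h1 v (mem_univ v))
    · exact fun v => cw_support (h2 v (mem_univ v))
    · intro u v
      have := h3 u (mem_univ u)
      rw [Finset.prod_ne_zero_iff] at this
      exact cw_support (this v (mem_univ v))
  have key : ∀ ω ω' : Coins V,
      cplW σ σp γm γ τ τp ω ω' * ((everInf A ω).card : ℝ)
        ≤ cplW σ σp γm γ τ τp ω ω' * ((everInf A ω').card : ℝ) := by
    intro ω ω'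
    rcases eq_or_ne (cplW σ σp γm γ τ τp ω ω') 0 with h | h
    · simp [h]
    · refine mul_le_mul_of_nonneg_left ?_ (hW0 ω ω')
      exact_mod_cast Finset.card_le_card (hsupp ω ω' h)
  rw [ge_iff_le]
  calc meanExtent A σ γ τ
      = ∑ ω : Coins V, (∑ ω' : Coins V, cplW σ σp γm γ τ τp ω ω') * ((everInf A ω).card : ℝ) := by
        unfold meanExtent
        exact Finset.sum_congr rfl fun ω _ => by rw [cplW_sum_right]
    _ = ∑ ω : Coins V, ∑ ω' : Coins V, cplW σ σp γm γ τ τp ω ω' * ((everInf A ω).card : ℝ) := by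
        simp [Finset.sum_mul]
    _ ≤ ∑ ω : Coins V, ∑ ω' : Coins V, cplW σ σp γm γ τ τp ω ω' * ((everInf A ω').card : ℝ) :=
        Finset.sum_le_sum fun ω _ => Finset.sum_le_sum fun ω' _ => key ω ω'
    _ = ∑ ω' : Coins V, ∑ ω : Coins V, cplW σ σp γm γ τ τp ω ω' * ((everInf A ω').card : ℝ) :=
        Finset.sum_comm
    _ = ∑ ω' : Coins V, (∑ ω : Coins V, cplW σ σp γm γ τ τp ω ω') * ((everInf A ω').card : ℝ) := by
        simp [Finset.sum_mul]
    _ = meanExtent A σp γm τp := by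
        unfold meanExtent
        exact Finset.sum_congr rfl fun ω' _ => by rw [cplW_sum_left]
end

section
/- (Pointwise monotonicity of infection probability.) Under the hypotheses of the main monotonicity theorem (σ₊ ≥ σ, γ₋ ≤ γ, τ₊ ≥ τ pointwise), for every node u the probability that u is ultimately infected under the epidemic (σ₊, γ₋, τ₊) is at least its probability of ultimate infection under (σ, γ, τ). -/
open Finset

variable {V : Type*} [Fintype V] [DecidableEq V]

/-! ### Auxiliary development: combinatorial coupling -/

def cumInf (A : V → V → Bool) (ω : Coins V) (t : ℕ) : Finset V :=
  (sirProc A ω t).1 ∪ (sirProc A ω t).2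

lemma cumInf_succ (A : V → V → Bool) (ω : Coins V) (t : ℕ) :
    cumInf A ω t ⊆ cumInf A ω (t + 1) := by
  intro v hv
  rcases Finset.mem_union.1 hv with h | h
  · exact Finset.mem_union.2 (Or.inr (Finset.mem_union.2 (Or.inr h)))
  · exact Finset.mem_union.2 (Or.inr (Finset.mem_union.2 (Or.inl h)))

lemma cumInf_mono_time (A : V → V → Bool) (ω : Coins V) {s t : ℕ} (h : s ≤ t) :
    cumInf A ω s ⊆ cumInf A ω t := by
  induction h with
  | refl => exact subset_rfl
  | step h ih => exact ih.trans (cumInf_succ A ω _)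

lemma exists_inf_time (A : V → V → Bool) (ω : Coins V) {v : V} :
    ∀ {t : ℕ}, v ∈ cumInf A ω t → ∃ s ≤ t, v ∈ (sirProc A ω s).1 := by
  intro t
  induction t with
  | zero =>
    intro hv
    rcases Finset.mem_union.1 hv with h | h
    · exact ⟨0, le_refl _, h⟩
    · simp [sirProc] at h
  | succ t ih =>
    intro hv
    rcases Finset.mem_union.1 hv with h | h
    · exact ⟨t + 1, le_refl _, h⟩
    · have : v ∈ cumInf A ω t := by
        rcases Finset.mem_union.1 h with h' | h'
        · exact Finset.mem_union.2 (Or.inr h')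
        · exact Finset.mem_union.2 (Or.inl h')
      obtain ⟨s, hs, hsv⟩ := ih this
      exact ⟨s, hs.trans (Nat.le_succ t), hsv⟩

lemma transmit (A : V → V → Bool) (ω : Coins V) {u v : V} {t : ℕ}
    (hu : u ∈ cumInf A ω t) (hr : ω.2.1 u = false) (hA : A u v = true)
    (ht : ω.2.2 u v = true) : v ∈ cumInf A ω (t + 1) := by
  obtain ⟨s, hs, hI⟩ := exists_inf_time A ω hu
  by_cases hv : v ∈ cumInf A ω s
  · exact cumInf_mono_time A ω (hs.trans (Nat.le_succ t)) hv
  · have h1 : v ∉ (sirProc A ω s).1 := fun h => hv (Finset.mem_union.2 (Or.inl h))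
    have h2 : v ∉ (sirProc A ω s).2 := fun h => hv (Finset.mem_union.2 (Or.inr h))
    have : v ∈ (sirProc A ω (s + 1)).1 := by
      show v ∈ (sirStep A ω (sirProc A ω s)).1
      simp only [sirStep, Finset.mem_filter, Finset.mem_univ, true_and]
      exact ⟨h1, h2, u, hI, hr, hA, ht⟩
    exact cumInf_mono_time A ω (Nat.succ_le_succ hs) (Finset.mem_union.2 (Or.inl this))

lemma cumInf_coupling (A : V → V → Bool) (ω ω' : Coins V)
    (h1 : ∀ v, ω.1 v = true → ω'.1 v = true)
    (h2 : ∀ v, ω.2.1 v = false → ω'.2.1 v = false)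
    (h3 : ∀ u v, ω.2.2 u v = true → ω'.2.2 u v = true) :
    ∀ t, cumInf A ω t ⊆ cumInf A ω' t := by
  intro t
  induction t with
  | zero =>
    intro v hv
    rcases Finset.mem_union.1 hv with h | h
    · simp only [sirProc, Finset.mem_filter, Finset.mem_univ, true_and] at h
      exact Finset.mem_union.2 (Or.inl (by
        simp only [sirProc, Finset.mem_filter, Finset.mem_univ, true_and]
        exact h1 v h))
    · simp [sirProc] at h
  | succ t ih =>
    intro v hv
    rcases Finset.mem_union.1 hv with h | h
    · have h' : v ∈ (sirStep A ω (sirProc A ω t)).1 := h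
      simp only [sirStep, Finset.mem_filter, Finset.mem_univ, true_and] at h'
      obtain ⟨-, -, w, hwI, hrem, hA, htr⟩ := h'
      have hw' : w ∈ cumInf A ω' t := ih (Finset.mem_union.2 (Or.inl hwI))
      exact transmit A ω' hw' (h2 w hrem) hA (h3 w v htr)
    · have h' : v ∈ (sirProc A ω t).2 ∪ (sirProc A ω t).1 := h
      have : v ∈ cumInf A ω t := by
        rcases Finset.mem_union.1 h' with h'' | h''
        · exact Finset.mem_union.2 (Or.inr h'')
        · exact Finset.mem_union.2 (Or.inl h'')
      exact cumInf_succ A ω' t (ih this)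

lemma everInf_eq_s8 (A : V → V → Bool) (ω : Coins V) :
    everInf A ω = cumInf A ω (Fintype.card V) := rfl

/-! ### Auxiliary development: probabilistic coupling -/

def pairW (p q : ℝ) : Bool → Bool → ℝ
  | false, false => 1 - q
  | false, true => q - p
  | true, false => 0
  | true, true => p

lemma pairW_sum_right (p q : ℝ) (a : Bool) :
    pairW p q a false + pairW p q a true = if a then p else 1 - p := by
  cases a <;> simp [pairW]

lemma pairW_sum_left (p q : ℝ) (b : Bool) :
    pairW p q false b + pairW p q true b = if b then q else 1 - q := by
  cases b <;> simp [pairW]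

lemma pairW_nonneg {p q : ℝ} (h0 : 0 ≤ p) (h1 : p ≤ q) (h2 : q ≤ 1) (a b : Bool) :
    0 ≤ pairW p q a b := by
  cases a <;> cases b <;> simp [pairW] <;> linarith

lemma sum_fun_prod {β : Type*} [Fintype β] (g : V → β → ℝ) :
    ∑ f : V → β, ∏ v, g v (f v) = ∏ v, ∑ b, g v b := by
  rw [Finset.prod_univ_sum]
  rw [Fintype.piFinset_univ]

lemma sum_bool' (g : Bool → ℝ) : ∑ b, g b = g false + g true := by
  simp [Fintype.sum_bool]; ring

lemma sum_fun2_prod (g : V → V → Bool → ℝ) :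
    ∑ f : V → V → Bool, ∏ u, ∏ v, g u v (f u v) = ∏ u, ∏ v, ∑ b, g u v b := by
  rw [sum_fun_prod (g := fun u (k : V → Bool) => ∏ v, g u v (k v))]
  exact Finset.prod_congr rfl fun u _ => sum_fun_prod _

lemma sum_coins_mul (F : (V → Bool) → ℝ) (G : (V → Bool) → ℝ) (H : (V → V → Bool) → ℝ) :
    ∑ ω : Coins V, F ω.1 * (G ω.2.1 * H ω.2.2) =
      (∑ a, F a) * ((∑ b, G b) * (∑ c, H c)) := by
  rw [Fintype.sum_prod_type]
  have key : ∀ a, (∑ y : (V → Bool) × (V → V → Bool), F a * (G y.1 * H y.2))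
      = F a * ((∑ b, G b) * (∑ c, H c)) := by
    intro a
    rw [← Finset.mul_sum]
    congr 1
    rw [Fintype.sum_prod_type]
    simp_rw [← Finset.mul_sum]
    rw [← Finset.sum_mul]
  rw [Finset.sum_congr rfl (fun a _ => key a), ← Finset.sum_mul]

def jointW (σ σp γm γ : V → ℝ) (τ τp : V → V → ℝ) (ω ω' : Coins V) : ℝ :=
  (∏ v, pairW (σ v) (σp v) (ω.1 v) (ω'.1 v)) *
  ((∏ v, pairW (γm v) (γ v) (ω'.2.1 v) (ω.2.1 v)) *
   ∏ u, ∏ v, pairW (τ u v) (τp u v) (ω.2.2 u v) (ω'.2.2 u v))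

lemma jointW_sum_right (σ σp γm γ : V → ℝ) (τ τp : V → V → ℝ) (ω : Coins V) :
    ∑ ω' : Coins V, jointW σ σp γm γ τ τp ω ω' = coinWeight σ γ τ ω := by
  unfold jointW
  rw [sum_coins_mul (fun a => ∏ v, pairW (σ v) (σp v) (ω.1 v) (a v))
      (fun b => ∏ v, pairW (γm v) (γ v) (b v) (ω.2.1 v))
      (fun c => ∏ u, ∏ v, pairW (τ u v) (τp u v) (ω.2.2 u v) (c u v))]
  rw [sum_fun_prod (g := fun v x => pairW (σ v) (σp v) (ω.1 v) x),
    sum_fun_prod (g := fun v x => pairW (γm v) (γ v) x (ω.2.1 v)),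
    sum_fun2_prod (g := fun u v x => pairW (τ u v) (τp u v) (ω.2.2 u v) x)]
  unfold coinWeight
  rw [mul_assoc]
  congr 1
  · exact Finset.prod_congr rfl fun v _ => by
      rw [sum_bool']; exact pairW_sum_right _ _ _
  congr 1
  · exact Finset.prod_congr rfl fun v _ => by
      rw [sum_bool']; exact pairW_sum_left _ _ _
  · exact Finset.prod_congr rfl fun u' _ => Finset.prod_congr rfl fun v _ => by
      rw [sum_bool']; exact pairW_sum_right _ _ _

lemma jointW_sum_left (σ σp γm γ : V → ℝ) (τ τp : V → V → ℝ) (ω' : Coins V) :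
    ∑ ω : Coins V, jointW σ σp γm γ τ τp ω ω' = coinWeight σp γm τp ω' := by
  unfold jointW
  rw [sum_coins_mul (fun a => ∏ v, pairW (σ v) (σp v) (a v) (ω'.1 v))
      (fun b => ∏ v, pairW (γm v) (γ v) (ω'.2.1 v) (b v))
      (fun c => ∏ u, ∏ v, pairW (τ u v) (τp u v) (c u v) (ω'.2.2 u v))]
  rw [sum_fun_prod (g := fun v x => pairW (σ v) (σp v) x (ω'.1 v)),
    sum_fun_prod (g := fun v x => pairW (γm v) (γ v) (ω'.2.1 v) x),
    sum_fun2_prod (g := fun u v x => pairW (τ u v) (τp u v) x (ω'.2.2 u v))]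
  unfold coinWeight
  rw [mul_assoc]
  congr 1
  · exact Finset.prod_congr rfl fun v _ => by
      rw [sum_bool']; exact pairW_sum_left _ _ _
  congr 1
  · exact Finset.prod_congr rfl fun v _ => by
      rw [sum_bool']; exact pairW_sum_right _ _ _
  · exact Finset.prod_congr rfl fun u' _ => Finset.prod_congr rfl fun v _ => by
      rw [sum_bool']; exact pairW_sum_left _ _ _

lemma jointW_nonneg (σ σp γm γ : V → ℝ) (τ τp : V → V → ℝ)
    (hσ : ∀ v, 0 ≤ σ v ∧ σ v ≤ σp v ∧ σp v ≤ 1)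
    (hγ : ∀ v, 0 ≤ γm v ∧ γm v ≤ γ v ∧ γ v ≤ 1)
    (hτ : ∀ u v, 0 ≤ τ u v ∧ τ u v ≤ τp u v ∧ τp u v ≤ 1) (ω ω' : Coins V) :
    0 ≤ jointW σ σp γm γ τ τp ω ω' := by
  refine mul_nonneg (Finset.prod_nonneg fun v _ =>
      pairW_nonneg (hσ v).1 (hσ v).2.1 (hσ v).2.2 _ _)
    (mul_nonneg (Finset.prod_nonneg fun v _ =>
      pairW_nonneg (hγ v).1 (hγ v).2.1 (hγ v).2.2 _ _)
    (Finset.prod_nonneg fun u _ => Finset.prod_nonneg fun v _ =>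
      pairW_nonneg (hτ u v).1 (hτ u v).2.1 (hτ u v).2.2 _ _))

lemma jointW_support (σ σp γm γ : V → ℝ) (τ τp : V → V → ℝ) (ω ω' : Coins V)
    (h : jointW σ σp γm γ τ τp ω ω' ≠ 0) :
    (∀ v, ω.1 v = true → ω'.1 v = true) ∧
    (∀ v, ω.2.1 v = false → ω'.2.1 v = false) ∧
    (∀ u v, ω.2.2 u v = true → ω'.2.2 u v = true) := by
  unfold jointW at h
  have h1 := left_ne_zero_of_mul h
  have h23 := right_ne_zero_of_mul h
  have h2 := left_ne_zero_of_mul h23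
  have h3 := right_ne_zero_of_mul h23
  refine ⟨fun v hv => ?_, fun v hv => ?_, fun u v huv => ?_⟩
  · by_contra hc
    have hb : ω'.1 v = false := by simpa using hc
    exact h1 (Finset.prod_eq_zero (Finset.mem_univ v) (by rw [hv, hb]; rfl))
  · by_contra hc
    have hb : ω'.2.1 v = true := by simpa using hc
    exact h2 (Finset.prod_eq_zero (Finset.mem_univ v) (by rw [hv, hb]; rfl))
  · by_contra hc
    have hb : ω'.2.2 u v = false := by simpa using hc
    exact h3 (Finset.prod_eq_zero (Finset.mem_univ u)
      (Finset.prod_eq_zero (Finset.mem_univ v) (by rw [huv, hb]; rfl)))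

/-- **pointwise monotonicity of infection probability.** Under the
hypotheses of the main monotonicity theorem (`σ₊ ≥ σ`, `γ₋ ≤ γ`, `τ₊ ≥ τ`
pointwise), every node `u` is at least as likely to be ultimately infected under
`(σ₊, γ₋, τ₊)` as under `(σ, γ, τ)`. -/
theorem sir_prob_infection_monotone {V : Type*} [Fintype V] [DecidableEq V]
    (A : V → V → Bool) (σ σp γm γ : V → ℝ) (τ τp : V → V → ℝ)
    (hσ : ∀ v, 0 ≤ σ v ∧ σ v ≤ σp v ∧ σp v ≤ 1)
    (hγ : ∀ v, 0 ≤ γm v ∧ γm v ≤ γ v ∧ γ v ≤ 1)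
    (hτ : ∀ u v, 0 ≤ τ u v ∧ τ u v ≤ τp u v ∧ τp u v ≤ 1) (u : V) :
    probInf A σp γm τp u ≥ probInf A σ γ τ u := by
  classical
  have hlow : probInf A σ γ τ u = ∑ ω : Coins V, ∑ ω' : Coins V,
      jointW σ σp γm γ τ τp ω ω' * (if u ∈ everInf A ω then (1:ℝ) else 0) := by
    unfold probInf
    refine Finset.sum_congr rfl fun ω _ => ?_
    rw [← jointW_sum_right σ σp γm γ τ τp ω, Finset.sum_mul]
  have hhigh : probInf A σp γm τp u = ∑ ω : Coins V, ∑ ω' : Coins V,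
      jointW σ σp γm γ τ τp ω ω' * (if u ∈ everInf A ω' then (1:ℝ) else 0) := by
    unfold probInf
    rw [Finset.sum_comm]
    refine Finset.sum_congr rfl fun ω' _ => ?_
    rw [← jointW_sum_left σ σp γm γ τ τp ω', Finset.sum_mul]
  rw [ge_iff_le, hlow, hhigh]
  refine Finset.sum_le_sum fun ω _ => Finset.sum_le_sum fun ω' _ => ?_
  by_cases hz : jointW σ σp γm γ τ τp ω ω' = 0
  · simp [hz]
  · obtain ⟨h1, h2, h3⟩ := jointW_support σ σp γm γ τ τp ω ω' hz
    have hsub : everInf A ω ⊆ everInf A ω' := by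
      rw [everInf_eq_s8, everInf_eq_s8]
      exact cumInf_coupling A ω ω' h1 h2 h3 (Fintype.card V)
    refine mul_le_mul_of_nonneg_left ?_ (jointW_nonneg σ σp γm γ τ τp hσ hγ hτ ω ω')
    by_cases hu : u ∈ everInf A ω
    · simp [hu, hsub hu]
    · simp only [hu, if_false]
      split <;> norm_num
end

section
/- (Mean transmissibility does not determine mean extent.) There exist a directed graph G and two edge transmission probability functions τ₁, τ₂ with the same removal and induction probabilities, such that the average of τ₁ over edges is strictly greater than the average of τ₂ over edges, yet the mean final extent of the SIR epidemic under τ₁ is strictly smaller than under τ₂. -/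
open Finset

variable {V : Type*} [Fintype V] [DecidableEq V]

private def e2 : Bool × Bool ≃ (Fin 2 → Bool) := (piFinTwoEquiv fun _ => Bool).symm

private def e3 : (Bool × Bool) × (Bool × Bool) ≃ (Fin 2 → Fin 2 → Bool) :=
  (Equiv.prodCongr e2 e2).trans (piFinTwoEquiv fun _ => (Fin 2 → Bool)).symm

private def eC : (Bool × Bool) × (Bool × Bool) × ((Bool × Bool) × (Bool × Bool)) ≃ Coins (Fin 2) :=
  Equiv.prodCongr e2 (Equiv.prodCongr e2 e3)

private lemma sum_coins_fin2 (f : Coins (Fin 2) → ℝ) :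
    ∑ ω : Coins (Fin 2), f ω =
      ∑ a : Bool, ∑ b : Bool, ∑ c : Bool, ∑ d : Bool,
        ∑ p : Bool, ∑ q : Bool, ∑ r : Bool, ∑ s : Bool,
          f (![a,b], ![c,d], ![![p,q],![r,s]]) := by
  rw [← Equiv.sum_comp eC f]
  simp only [Fintype.sum_prod_type]
  rfl

private def Aex : Fin 2 → Fin 2 → Bool := fun _ v => v = 1

private lemma meanExtent_one : meanExtent Aex ![1,0] ![0,0] ![![0,0],![0,1]] = 1 := by
  show _ = (1:ℝ)
  rw [meanExtent, sum_coins_fin2]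
  simp only [Fintype.sum_bool, coinWeight, Fin.prod_univ_two,
    Matrix.cons_val_zero, Matrix.cons_val_one, Matrix.head_cons, Matrix.head_fin_const,
    if_true, if_false, Bool.false_eq_true, Bool.true_eq_false]
  norm_num
  decide

private lemma meanExtent_two : meanExtent Aex ![1,0] ![0,0] ![![0,3/4],![0,0]] = 7/4 := by
  have h1 : (everInf Aex (![true, false], ![false, false],
      ![![false, true], ![false, false]])).card = 2 := by decide
  have h2 : (everInf Aex (![true, false], ![false, false],
      ![![false, false], ![false, false]])).card = 1 := by decide
  rw [meanExtent, sum_coins_fin2]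
  simp only [Fintype.sum_bool, coinWeight, Fin.prod_univ_two,
    Matrix.cons_val_zero, Matrix.cons_val_one, Matrix.head_cons, Matrix.head_fin_const,
    if_true, if_false, Bool.false_eq_true, Bool.true_eq_false]
  norm_num [h1, h2]

/-- **mean transmissibility does not determine mean extent.** There
exist a directed graph and two transmission probability functions `τ₁, τ₂` (with the
same induction and removal probabilities) such that the average of `τ₁` over the
edges is strictly larger than that of `τ₂`, yet the mean final extent under `τ₁` is
strictly smaller than under `τ₂`. -/
theorem sir_avg_transmissibility_not_determining :
    ∃ (n : ℕ) (A : Fin n → Fin n → Bool) (σ γ : Fin n → ℝ) (τ₁ τ₂ : Fin n → Fin n → ℝ),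
      (∀ v, 0 ≤ σ v ∧ σ v ≤ 1) ∧ (∀ v, 0 ≤ γ v ∧ γ v ≤ 1) ∧
      (∀ u v, 0 ≤ τ₁ u v ∧ τ₁ u v ≤ 1) ∧ (∀ u v, 0 ≤ τ₂ u v ∧ τ₂ u v ≤ 1) ∧
      (Finset.univ.filter (fun p : Fin n × Fin n => A p.1 p.2 = true)).Nonempty ∧
      (∑ p ∈ Finset.univ.filter (fun p : Fin n × Fin n => A p.1 p.2 = true), τ₁ p.1 p.2) /
          ((Finset.univ.filter (fun p : Fin n × Fin n => A p.1 p.2 = true)).card : ℝ)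
        > (∑ p ∈ Finset.univ.filter (fun p : Fin n × Fin n => A p.1 p.2 = true), τ₂ p.1 p.2) /
          ((Finset.univ.filter (fun p : Fin n × Fin n => A p.1 p.2 = true)).card : ℝ) ∧
      meanExtent A σ γ τ₁ < meanExtent A σ γ τ₂ := by
  refine ⟨2, Aex, ![1,0], ![0,0], ![![0,0],![0,1]], ![![0,3/4],![0,0]], ?_, ?_, ?_, ?_, ?_, ?_, ?_⟩
  · intro v; fin_cases v <;> norm_num
  · intro v; fin_cases v <;> norm_num
  · intro u v; fin_cases u <;> fin_cases v <;> norm_num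
  · intro u v; fin_cases u <;> fin_cases v <;> norm_num
  · exact ⟨(0,1), by decide⟩
  · have hfilter : Finset.univ.filter (fun p : Fin 2 × Fin 2 => Aex p.1 p.2 = true)
        = {((0:Fin 2),(1:Fin 2)), ((1:Fin 2),(1:Fin 2))} := by decide
    rw [hfilter]
    norm_num
  · rw [meanExtent_one, meanExtent_two]; norm_num
end

section
/- (No outbreak transition for 2FleeSIR on the complete graph.) Consider the 2FleeSIR epidemic on the complete graph on n nodes with a single initially infected node, removal probability 0, and uniform transmission probability τ. Then the mean final extent equals exactly 1 + τ(n − 1): each of the n − 1 other nodes is infected in the first round independently with probability τ, and all nodes that remain susceptible after the first round observe at least two infected neighbors whenever ≥ 2 nodes are infected (and, in any case, no further infections occur), so the epidemic spreads no further. Thus the mean extent is linear in τ and n, with no discontinuous jump at τ = 1/n. -/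
open Finset

variable {V : Type*} [Fintype V] [DecidableEq V]

/-- One step of 2FleeSIR in which a susceptible node observes a neighbour as
infected when that neighbour is visibly affected, i.e. currently infected or
already removed (ever-infected): with at least `2` such neighbours it severs all
its ties before the transmission round. -/
def flee2Step (A : V → V → Bool) (ω : Coins V) (p : Finset V × Finset V × Finset V) :
    Finset V × Finset V × Finset V :=
  let Sev : Finset V := p.2.2 ∪ Finset.univ.filter (fun v => v ∉ p.1 ∧ v ∉ p.2.1 ∧
      2 ≤ (Finset.univ.filter (fun u => A u v = true ∧ (u ∈ p.1 ∨ u ∈ p.2.1))).card)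
  (Finset.univ.filter (fun v => v ∉ p.1 ∧ v ∉ p.2.1 ∧ v ∉ Sev ∧
      ∃ u ∈ p.1, ω.2.1 u = false ∧ A u v = true ∧ ω.2.2 u v = true),
   p.2.1 ∪ p.1, Sev)

def flee2Proc (A : V → V → Bool) (ω : Coins V) : ℕ → Finset V × Finset V × Finset V
  | 0 => (Finset.univ.filter (fun v => ω.1 v = true), ∅, ∅)
  | t + 1 => flee2Step A ω (flee2Proc A ω t)

def everFlee2 (A : V → V → Bool) (ω : Coins V) : Finset V :=
  (flee2Proc A ω (Fintype.card V)).1 ∪ (flee2Proc A ω (Fintype.card V)).2.1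

/-- The mean final extent of this 2FleeSIR epidemic. -/
noncomputable def flee2MeanExtent (A : V → V → Bool) (σ γ : V → ℝ) (τ : V → V → ℝ) : ℝ :=
  ∑ ω : Coins V, coinWeight σ γ τ ω * ((everFlee2 A ω).card : ℝ)


section AuxProofs

variable {V : Type*} [Fintype V] [DecidableEq V]

private lemma sum_fun_prod' {ι α : Type*} [Fintype ι] [DecidableEq ι] [Fintype α]
    (w : ι → α → ℝ) : ∑ c : ι → α, ∏ i, w i (c i) = ∏ i, ∑ a, w i a := by
  rw [Finset.prod_univ_sum, Fintype.piFinset_univ]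

private lemma sum_fun2_prod_s13 (w : V → V → Bool → ℝ) :
    ∑ c : V → V → Bool, ∏ u, ∏ v, w u v (c u v)
      = ∏ u, ∏ v, (w u v true + w u v false) := by
  have h := sum_fun_prod' (fun (u : V) (f : V → Bool) => ∏ v, w u v (f v))
  rw [h]
  refine Finset.prod_congr rfl fun u _ => ?_
  rw [sum_fun_prod' (fun (v : V) (b : Bool) => w u v b)]
  exact Finset.prod_congr rfl fun v _ => by simp [add_comm]

private lemma flee2_stable (A : V → V → Bool) (ω : Coins V)
    {p : Finset V × Finset V × Finset V} (h : p.1 = ∅) :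
    (flee2Step A ω p).1 = ∅ ∧ (flee2Step A ω p).2.1 = p.2.1 := by
  constructor
  · ext v; simp [flee2Step, h]
  · simp [flee2Step, h]

private lemma flee2_ever_eq (s : V) (c : V → V → Bool) :
    everFlee2 (fun u v : V => decide (u ≠ v)) (fun v => decide (v = s), fun _ => false, c)
      = insert s (univ.filter fun v => v ≠ s ∧ c s v = true) := by
  set A : V → V → Bool := fun u v => decide (u ≠ v) with hA
  set ω : Coins V := (fun v => decide (v = s), fun _ => false, c) with hω
  set I1 : Finset V := univ.filter (fun v => v ≠ s ∧ c s v = true) with hI1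
  have h0 : flee2Proc A ω 0 = ({s}, ∅, ∅) := by
    have : univ.filter (fun v => ω.1 v = true) = {s} := by
      ext v; simp [hω]
    show (univ.filter (fun v => ω.1 v = true), (∅ : Finset V), (∅ : Finset V)) = _
    rw [this]
  have e1 : flee2Proc A ω 1 = flee2Step A ω ({s}, ∅, ∅) := by
    rw [← h0]; rfl
  have h1 : flee2Proc A ω 1 = (I1, {s}, ∅) := by
    rw [e1]
    have hsmall : ∀ v : V,
        ¬ (2 ≤ (univ.filter (fun u => A u v = true ∧
            (u ∈ ({s} : Finset V) ∨ u ∈ (∅ : Finset V)))).card) := by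
      intro v
      have hsub : (univ.filter (fun u => A u v = true ∧
          (u ∈ ({s} : Finset V) ∨ u ∈ (∅ : Finset V)))) ⊆ {s} := by
        intro u hu
        simp only [Finset.mem_filter, Finset.mem_singleton, Finset.notMem_empty,
          or_false] at hu ⊢
        exact hu.2.2
      have := Finset.card_le_card hsub
      simp only [Finset.card_singleton] at this
      omega
    have hSev : ((∅ : Finset V) ∪ univ.filter (fun v => v ∉ ({s} : Finset V) ∧
        v ∉ (∅ : Finset V) ∧ 2 ≤ (univ.filter (fun u => A u v = true ∧
          (u ∈ ({s} : Finset V) ∨ u ∈ (∅ : Finset V)))).card)) = ∅ := by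
      ext v
      simp only [Finset.empty_union, Finset.mem_filter, Finset.mem_univ, true_and,
        Finset.notMem_empty, iff_false, not_and]
      intro _ _
      intro h2
      refine hsmall v (le_trans h2 (Finset.card_le_card ?_))
      intro u hu
      simp only [Finset.mem_filter] at hu ⊢
      tauto
    show (_, _, _) = (I1, ({s} : Finset V), (∅ : Finset V))
    refine Prod.ext ?_ (Prod.ext ?_ ?_)
    · show univ.filter _ = I1
      ext v
      simp only [hI1, Finset.mem_filter, Finset.mem_univ, true_and, hSev]
      constructor
      · rintro ⟨hv1, -, -, u, hu, -, hAu, hcu⟩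
        simp only [Finset.mem_singleton] at hv1 hu
        subst hu
        exact ⟨hv1, hcu⟩
      · rintro ⟨hv1, hcv⟩
        exact ⟨by simpa using hv1, by simp, by simp, s, by simp, rfl,
          by simp [hA, Ne.symm hv1], hcv⟩
    · show (∅ : Finset V) ∪ {s} = {s}
      simp
    · exact hSev
  have e2 : flee2Proc A ω 2 = flee2Step A ω (I1, {s}, ∅) := by
    rw [← h1]; rfl
  have hP2I : (flee2Proc A ω 2).1 = ∅ := by
    rw [e2]
    ext v
    simp only [flee2Step, Finset.mem_filter, Finset.mem_univ, true_and,
      Finset.notMem_empty, iff_false]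
    rintro ⟨hvI, hvs, hvSev, u, hu, hAu, hcu⟩
    apply hvSev
    simp only [Finset.empty_union, Finset.mem_union, Finset.mem_filter,
      Finset.mem_univ, true_and, Finset.notMem_empty, false_or]
    refine ⟨hvI, hvs, ?_⟩
    have hus : u ≠ s := by
      simp only [hI1, Finset.mem_filter] at hu
      exact hu.2.1
    have huv : u ≠ v := by
      intro h; exact hvI (h ▸ hu)
    have hsv : s ≠ v := by
      intro h
      exact hvs (by simp [h])
    have hsub : ({u, s} : Finset V) ⊆ univ.filter (fun w => A w v = true ∧
        (w ∈ I1 ∨ w ∈ ({s} : Finset V))) := by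
      intro w hw
      simp only [Finset.mem_insert, Finset.mem_singleton] at hw
      rcases hw with rfl | rfl
      · simp [hA, huv, hu]
      · simp [hA, hsv]
    have := Finset.card_le_card hsub
    rwa [Finset.card_pair hus] at this
  have hP2R : (flee2Proc A ω 2).2.1 = {s} ∪ I1 := by
    rw [e2]
    rfl
  have hK : ∀ k : ℕ, (flee2Proc A ω (k + 2)).1 = ∅ ∧
      (flee2Proc A ω (k + 2)).2.1 = {s} ∪ I1 := by
    intro k
    induction k with
    | zero => exact ⟨hP2I, hP2R⟩
    | succ n ih =>
      have e : flee2Proc A ω (n + 1 + 2) = flee2Step A ω (flee2Proc A ω (n + 2)) := rfl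
      obtain ⟨s1, s2⟩ := flee2_stable A ω ih.1
      rw [e]
      exact ⟨s1, s2.trans ih.2⟩
  have hcard1 : 1 ≤ Fintype.card V := Fintype.card_pos_iff.mpr ⟨s⟩
  unfold everFlee2
  rcases Nat.lt_or_ge (Fintype.card V) 2 with hlt | hge
  · have hcv : Fintype.card V = 1 := by omega
    rw [hcv, h1]
    ext v
    simp [hI1, or_comm]
  · obtain ⟨k, hk⟩ : ∃ k, Fintype.card V = k + 2 := ⟨Fintype.card V - 2, by omega⟩
    rw [hk, (hK k).1, (hK k).2]
    ext v
    simp [hI1, or_comm]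

end AuxProofs

/-- **no outbreak transition for 2FleeSIR on the complete graph.**
On the complete graph `K_n` with one initially infected node `s`, removal
probability `0` and uniform transmission probability `t ∈ [0,1]`, the mean final
extent of 2FleeSIR is exactly `1 + t(n-1)` — linear in `t` and `n`, with no jump at
`t = 1/n`. -/
theorem flee_complete_graph_linear_extent {V : Type*} [Fintype V] [DecidableEq V]
    (s : V) (t : ℝ) (h0 : 0 ≤ t) (h1 : t ≤ 1) :
    flee2MeanExtent (fun u v => decide (u ≠ v))
        (fun v => if v = s then 1 else 0) (fun _ => 0) (fun _ _ => t)
      = 1 + t * ((Fintype.card V : ℝ) - 1) := by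
  classical
  set σ : V → ℝ := fun v => if v = s then 1 else 0 with hσ
  set γ : V → ℝ := fun _ => (0:ℝ) with hγ
  set τ : V → V → ℝ := fun _ _ => t with hτ
  set A : V → V → Bool := fun u v => decide (u ≠ v) with hA
  set a₀ : V → Bool := fun v => decide (v = s) with ha₀
  set b₀ : V → Bool := fun _ => false with hb₀
  set F : Coins V → ℝ :=
    fun ω => coinWeight σ γ τ ω * ((everFlee2 A ω).card : ℝ) with hF
  have hsum : flee2MeanExtent A σ γ τ = ∑ ω : Coins V, F ω := rfl
  have hzero1 : ∀ a : V → Bool, a ≠ a₀ →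
      ∀ q : (V → Bool) × (V → V → Bool), F (a, q) = 0 := by
    intro a ha q
    have hz : (∏ v, if a v then σ v else 1 - σ v) = 0 := by
      obtain ⟨v, hv⟩ : ∃ v, a v ≠ a₀ v := by
        by_contra h; push_neg at h; exact ha (funext h)
      refine Finset.prod_eq_zero (Finset.mem_univ v) ?_
      by_cases hvs : v = s
      · subst hvs
        have hav : a v = false := by simpa [ha₀] using hv
        simp [hav, hσ]
      · have hav : a v = true := by simpa [ha₀, hvs] using hv
        simp [hav, hσ, hvs]
    simp [hF, coinWeight, hz]
  have hzero2 : ∀ b : V → Bool, b ≠ b₀ →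
      ∀ cc : V → V → Bool, F (a₀, b, cc) = 0 := by
    intro b hb cc
    have hz : (∏ v, if b v then γ v else 1 - γ v) = 0 := by
      obtain ⟨v, hv⟩ : ∃ v, b v ≠ false := by
        by_contra h; push_neg at h; exact hb (funext h)
      refine Finset.prod_eq_zero (Finset.mem_univ v) ?_
      have hbv : b v = true := by simpa using hv
      simp [hbv, hγ]
    simp [hF, coinWeight, hz]
  have e1 : ∑ ω : Coins V, F ω = ∑ cc : V → V → Bool, F (a₀, b₀, cc) := by
    rw [Fintype.sum_prod_type]
    rw [Finset.sum_eq_single_of_mem (f := fun a => ∑ q : (V → Bool) × (V → V → Bool), F (a, q))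
      a₀ (Finset.mem_univ _) (fun a _ ha => by simp [hzero1 a ha])]
    rw [Fintype.sum_prod_type]
    exact Finset.sum_eq_single_of_mem (f := fun b => ∑ cc : V → V → Bool, F (a₀, b, cc))
      b₀ (Finset.mem_univ _) (fun b _ hb => by simp [hzero2 b hb])
  have hw : ∀ cc : V → V → Bool, F (a₀, b₀, cc)
      = (∏ u, ∏ v, if cc u v then t else 1 - t) *
        (1 + ∑ v ∈ univ.erase s, (if cc s v = true then (1:ℝ) else 0)) := by
    intro cc
    have hW1 : (∏ v, if a₀ v then σ v else 1 - σ v) = 1 := by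
      apply Finset.prod_eq_one; intro v _
      by_cases hvs : v = s <;> simp [ha₀, hσ, hvs]
    have hW2 : (∏ v, if b₀ v then γ v else 1 - γ v) = 1 := by
      simp [hb₀, hγ]
    have hev : everFlee2 A (a₀, b₀, cc)
        = insert s (univ.filter fun v => v ≠ s ∧ cc s v = true) := by
      rw [hA, ha₀, hb₀]
      exact flee2_ever_eq s cc
    have hcardins : ((insert s (univ.filter fun v => v ≠ s ∧ cc s v = true)).card : ℝ)
        = 1 + ∑ v ∈ univ.erase s, (if cc s v = true then (1:ℝ) else 0) := by
      rw [Finset.card_insert_of_notMem (by simp)]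
      have hfe : (univ.filter fun v => v ≠ s ∧ cc s v = true)
          = (univ.erase s).filter (fun v => cc s v = true) := by
        ext v; simp [Finset.mem_erase, and_comm]
      rw [hfe, Finset.card_filter]
      push_cast
      rw [add_comm]
    rw [hF]
    simp only [coinWeight, hW1, hW2, one_mul, mul_one, hev, hcardins, hτ]
  have htot : ∑ cc : V → V → Bool, ∏ u, ∏ v, (if cc u v then t else 1 - t) = 1 := by
    rw [sum_fun2_prod_s13 (fun u v b => if b then t else 1 - t)]
    simp [show t + (1 - t) = 1 from by ring]
  have hmarg : ∀ v₀ ∈ univ.erase s,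
      ∑ cc : V → V → Bool, (∏ u, ∏ v, if cc u v then t else 1 - t) *
        (if cc s v₀ = true then (1:ℝ) else 0) = t := by
    intro v₀ _
    have key : ∀ cc : V → V → Bool,
        (∏ u, ∏ v, if cc u v then t else 1 - t) * (if cc s v₀ = true then (1:ℝ) else 0)
        = ∏ u, ∏ v, (if u = s ∧ v = v₀ then (if cc u v then t else 0)
            else (if cc u v then t else 1 - t)) := by
      intro cc
      by_cases h : cc s v₀ = true
      · rw [h]
        simp only [if_true, mul_one]
        refine Finset.prod_congr rfl fun u _ => Finset.prod_congr rfl fun v _ => ?_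
        by_cases huv : u = s ∧ v = v₀
        · obtain ⟨rfl, rfl⟩ := huv
          simp [h]
        · simp [huv]
      · have h' : cc s v₀ = false := by simpa using h
        rw [h']
        simp only [Bool.false_eq_true, if_false, mul_zero]
        symm
        apply Finset.prod_eq_zero (Finset.mem_univ s)
        apply Finset.prod_eq_zero (Finset.mem_univ v₀)
        simp [h']
    rw [Finset.sum_congr rfl (fun cc _ => key cc)]
    rw [sum_fun2_prod_s13 (fun u v b => if u = s ∧ v = v₀ then (if b then t else 0)
      else (if b then t else 1 - t))]
    have hfac : ∀ u v : V,
        ((if u = s ∧ v = v₀ then (if true then t else 0) else (if true then t else 1 - t)) +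
         (if u = s ∧ v = v₀ then (if false then t else 0) else (if false then t else 1 - t)))
        = if u = s ∧ v = v₀ then t else 1 := by
      intro u v; by_cases hP : u = s ∧ v = v₀ <;> simp [hP] <;> ring
    rw [Finset.prod_congr rfl (fun u _ => Finset.prod_congr rfl (fun v _ => hfac u v))]
    have inner : ∀ u : V, (∏ v, if u = s ∧ v = v₀ then t else 1) = if u = s then t else 1 := by
      intro u
      by_cases hu : u = s
      · subst hu
        simp only [true_and]
        rw [Finset.prod_ite_eq' Finset.univ v₀ (fun _ => t)]
        simp
      · simp [hu]
    rw [Finset.prod_congr rfl (fun u _ => inner u),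
      Finset.prod_ite_eq' Finset.univ s (fun _ => t)]
    simp
  rw [hsum, e1, Finset.sum_congr rfl (fun cc _ => hw cc)]
  have expand : ∀ cc : V → V → Bool,
      (∏ u, ∏ v, if cc u v then t else 1 - t) *
        (1 + ∑ v ∈ univ.erase s, (if cc s v = true then (1:ℝ) else 0))
      = (∏ u, ∏ v, if cc u v then t else 1 - t) +
        ∑ v ∈ univ.erase s, (∏ u, ∏ v', if cc u v' then t else 1 - t) *
          (if cc s v = true then (1:ℝ) else 0) := by
    intro cc; rw [mul_add, mul_one, Finset.mul_sum]
  rw [Finset.sum_congr rfl (fun cc _ => expand cc), Finset.sum_add_distrib, htot,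
    Finset.sum_comm, Finset.sum_congr rfl hmarg, Finset.sum_const, nsmul_eq_mul,
    Finset.card_erase_of_mem (Finset.mem_univ s), Finset.card_univ]
  have hc : ((Fintype.card V - 1 : ℕ) : ℝ) = (Fintype.card V : ℝ) - 1 := by
    have h1c : 1 ≤ Fintype.card V := Fintype.card_pos_iff.mpr ⟨s⟩
    rw [Nat.cast_sub h1c]; simp
  rw [hc]
  ring
end
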